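/- arXiv:0802.4207 — 7 statements merged into one kernel-verified Lean document; each statement's English description precedes it below -/
import Mathlib

section
/- Let d ≥ 2, k ≥ 3, C = {u ∈ ℝ≥0^d : k·u_i − u_d ≥ 0 for i = 1,…,d−1}, f_i = e_i for i < d, f_d = k·e_d + e_1 + ⋯ + e_{d−1}, and D_0 = {0} ∪ {j·e_d + e_1 + ⋯ + e_{d−1} : j = 1,…,k−1}. Then the lattice points C ∩ ℤ^d decompose as the disjoint union over u ∈ D_0 of the sets u + span_{ℕ}{f_1,…,f_d} (nonnegative integer combinations). -/
def coneGen (d k : ℕ) (i : Fin d) : Fin d → ℤ :=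
  if i.val < d - 1 then Pi.single i 1
  else fun j : Fin d => if j.val < d - 1 then 1 else (k : ℤ)

lemma sum_coneGen_apply {d k : ℕ} (hd : 2 ≤ d) (c : Fin d → ℕ) (j : Fin d) :
    (∑ i : Fin d, (c i : ℤ) • coneGen d k i) j =
      if j.val < d - 1 then (c j : ℤ) + c ⟨d - 1, Nat.sub_lt (by omega) Nat.one_pos⟩
      else (k : ℤ) * c ⟨d - 1, Nat.sub_lt (by omega) Nat.one_pos⟩ := by
  classical
  set last : Fin d := ⟨d - 1, Nat.sub_lt (by omega) Nat.one_pos⟩ with hlast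
  rw [Finset.sum_apply, ← Finset.add_sum_erase _ _ (Finset.mem_univ last)]
  have h1 : ∀ i ∈ Finset.univ.erase last,
      ((c i : ℤ) • coneGen d k i) j = if j = i then (c i : ℤ) else 0 := by
    intro i hi
    have hne : i ≠ last := Finset.ne_of_mem_erase hi
    have hiv : i.val < d - 1 := by
      have : i.val ≠ d - 1 := fun h => hne (Fin.ext h)
      omega
    simp [coneGen, hiv, Pi.single_apply, mul_ite]
  rw [Finset.sum_congr rfl h1, Finset.sum_ite_eq]
  have hlv : last.val = d - 1 := rfl
  have hcg : coneGen d k last j = if j.val < d - 1 then 1 else (k : ℤ) := by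
    simp [coneGen, hlv]
  by_cases hj : j.val < d - 1
  · have hjne : j ≠ last := by
      intro h; rw [h] at hj; simp only [hlv] at hj; omega
    simp [hcg, hj, Finset.mem_erase, hjne]
    ring
  · have hje : j = last := by
      apply Fin.ext
      have hh := j.isLt
      simp only [hlv]
      omega
    subst hje
    simp only [Pi.smul_apply, hcg, hj, if_false, smul_eq_mul, Finset.mem_erase]
    simp
    ring

/-- The shape condition on the "offset" part. -/
def IsOffset (d k : ℕ) (v : Fin d → ℤ) : Prop :=
  v = 0 ∨ ∃ j : ℕ, 1 ≤ j ∧ j ≤ k - 1 ∧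
      v = fun i : Fin d => if i.val < d - 1 then 1 else (j : ℤ)

lemma offset_last_bounds {d k : ℕ} (hd : 2 ≤ d) (hk : 3 ≤ k) {v : Fin d → ℤ}
    (h : IsOffset d k v) :
    0 ≤ v ⟨d - 1, Nat.sub_lt (by omega) Nat.one_pos⟩ ∧ v ⟨d - 1, Nat.sub_lt (by omega) Nat.one_pos⟩ < k := by
  have hnlt : ¬((⟨d - 1, Nat.sub_lt (by omega) Nat.one_pos⟩ : Fin d).val < d - 1) := by simp
  rcases h with rfl | ⟨j, hj1, hj2, rfl⟩
  · simp
    omega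
  · simp only [hnlt, if_false]
    constructor
    · positivity
    · have : (j : ℤ) ≤ (k : ℤ) - 1 := by
        have h2 : j ≤ k - 1 := hj2
        omega
      omega

lemma offset_small {d k : ℕ} (hd : 2 ≤ d) {v : Fin d → ℤ}
    (h : IsOffset d k v) (i : Fin d) (hi : i.val < d - 1) :
    v i = if v ⟨d - 1, Nat.sub_lt (by omega) Nat.one_pos⟩ = 0 then 0 else 1 := by
  have hnlt : ¬((⟨d - 1, Nat.sub_lt (by omega) Nat.one_pos⟩ : Fin d).val < d - 1) := by simp
  rcases h with rfl | ⟨j, hj1, hj2, rfl⟩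
  · simp
  · simp only [hnlt, if_false, hi, if_true]
    have : (j : ℤ) ≠ 0 := by
      have : 1 ≤ (j : ℤ) := by exact_mod_cast hj1
      omega
    simp [this]
    omega

lemma offset_det {d k : ℕ} (hd : 2 ≤ d) {v w : Fin d → ℤ}
    (hv : IsOffset d k v) (hw : IsOffset d k w)
    (h : v ⟨d - 1, Nat.sub_lt (by omega) Nat.one_pos⟩ = w ⟨d - 1, Nat.sub_lt (by omega) Nat.one_pos⟩) : v = w := by
  have hnlt : ¬((⟨d - 1, Nat.sub_lt (by omega) Nat.one_pos⟩ : Fin d).val < d - 1) := by simp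
  rcases hv with rfl | ⟨j, hj1, hj2, rfl⟩ <;> rcases hw with rfl | ⟨j', hj1', hj2', rfl⟩
  · rfl
  · exfalso
    simp only [hnlt, if_false, Pi.zero_apply] at h
    have : 1 ≤ (j' : ℤ) := by exact_mod_cast hj1'
    omega
  · exfalso
    simp only [hnlt, if_false, Pi.zero_apply] at h
    have : 1 ≤ (j : ℤ) := by exact_mod_cast hj1
    omega
  · simp only [hnlt, if_false] at h
    have : j = j' := by exact_mod_cast h
    rw [this]

/-- Key: any decomposition is determined by `y`. -/
lemma key {d k : ℕ} (hd : 2 ≤ d) (hk : 3 ≤ k) (y : Fin d → ℤ)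
    (p : (Fin d → ℤ) × (Fin d → ℕ))
    (h1 : IsOffset d k p.1)
    (h2 : y = p.1 + ∑ i : Fin d, (p.2 i : ℤ) • coneGen d k i) :
    p.1 ⟨d - 1, Nat.sub_lt (by omega) Nat.one_pos⟩ = y ⟨d - 1, Nat.sub_lt (by omega) Nat.one_pos⟩ % k ∧
    (p.2 ⟨d - 1, Nat.sub_lt (by omega) Nat.one_pos⟩ : ℤ) = y ⟨d - 1, Nat.sub_lt (by omega) Nat.one_pos⟩ / k ∧
    ∀ i : Fin d, i.val < d - 1 →
      (p.2 i : ℤ) = y i - p.1 i - p.2 ⟨d - 1, Nat.sub_lt (by omega) Nat.one_pos⟩ := by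
  have hnlt : ¬((⟨d - 1, Nat.sub_lt (by omega) Nat.one_pos⟩ : Fin d).val < d - 1) := by simp
  have hkpos : (0 : ℤ) < k := by exact_mod_cast (by omega : 0 < k)
  have hyL : y ⟨d - 1, Nat.sub_lt (by omega) Nat.one_pos⟩ = p.1 ⟨d - 1, Nat.sub_lt (by omega) Nat.one_pos⟩ + k * p.2 ⟨d - 1, Nat.sub_lt (by omega) Nat.one_pos⟩ := by
    have := congrFun h2 ⟨d - 1, Nat.sub_lt (by omega) Nat.one_pos⟩
    rwa [Pi.add_apply, sum_coneGen_apply hd, if_neg hnlt] at this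
  obtain ⟨hb0, hbk⟩ := offset_last_bounds hd hk h1
  have hdm := (Int.ediv_emod_unique (a := y ⟨d - 1, Nat.sub_lt (by omega) Nat.one_pos⟩)
      (q := (p.2 ⟨d - 1, Nat.sub_lt (by omega) Nat.one_pos⟩ : ℤ)) (r := p.1 ⟨d - 1, Nat.sub_lt (by omega) Nat.one_pos⟩) hkpos).2
      ⟨by omega, hb0, hbk⟩
  refine ⟨hdm.2.symm, hdm.1.symm, fun i hi => ?_⟩
  have hyi := congrFun h2 i
  rw [Pi.add_apply, sum_coneGen_apply hd, if_pos hi] at hyi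
  omega

theorem stmt1 (d k : ℕ) (hd : 2 ≤ d) (hk : 3 ≤ k) (y : Fin d → ℤ) :
    ((∀ i, 0 ≤ y i) ∧
        ∀ i : Fin d, i.val < d - 1 → y ⟨d - 1, by omega⟩ ≤ (k : ℤ) * y i) ↔
      ∃! p : (Fin d → ℤ) × (Fin d → ℕ),
        (p.1 = 0 ∨ ∃ j : ℕ, 1 ≤ j ∧ j ≤ k - 1 ∧
            p.1 = fun i : Fin d => if i.val < d - 1 then 1 else (j : ℤ)) ∧
        y = p.1 + ∑ i : Fin d, (p.2 i : ℤ) • coneGen d k i := by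
  classical
  have hnlt : ¬((⟨d - 1, by omega⟩ : Fin d).val < d - 1) := by simp
  have hkpos : (0 : ℤ) < k := by exact_mod_cast (by omega : 0 < k)
  constructor
  · rintro ⟨hpos, hineq⟩
    set L : Fin d := ⟨d - 1, by omega⟩ with hL
    set q : ℤ := y L / k with hq
    set r : ℤ := y L % k with hr
    have hr0 : 0 ≤ r := Int.emod_nonneg _ (by omega)
    have hrk : r < k := Int.emod_lt_of_pos _ hkpos
    have hq0 : 0 ≤ q := Int.ediv_nonneg (hpos L) (le_of_lt hkpos)
    have hyL : y L = r + k * q := (Int.emod_add_mul_ediv _ _).symm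
    have hqle : ∀ i : Fin d, i.val < d - 1 → q ≤ y i := by
      intro i hi
      have h1 : y L ≤ k * y i := hineq i hi
      have h2 : y L / k ≤ (k * y i) / k := Int.ediv_le_ediv hkpos h1
      rwa [Int.mul_ediv_cancel_left _ (by omega)] at h2
    set ε : ℤ := if r = 0 then 0 else 1 with hε
    set p1 : Fin d → ℤ :=
      if r = 0 then 0 else fun i => if i.val < d - 1 then 1 else r with hp1
    set c : Fin d → ℕ :=
      fun i => if i.val < d - 1 then (y i - q - ε).toNat else q.toNat with hc
    have hcL : c L = q.toNat := by simp [hc, hL]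
    have hcnonneg : ∀ i : Fin d, i.val < d - 1 → 0 ≤ y i - q - ε := by
      intro i hi
      by_cases hr0' : r = 0
      · have := hqle i hi
        simp only [hε, hr0', if_true]
        omega
      · have h1 : y L ≤ k * y i := hineq i hi
        have h2 : k * q < k * y i := by omega
        have h3 : q < y i := lt_of_mul_lt_mul_left (by omega) (by omega : (0:ℤ) ≤ k)
        simp only [hε, hr0', if_false]
        omega
    have hform : IsOffset d k p1 := by
      by_cases hr0' : r = 0
      · left; simp [hp1, hr0']
      · right
        refine ⟨r.toNat, by omega, by omega, ?_⟩
        have hcast : ((r.toNat : ℤ)) = r := Int.toNat_of_nonneg hr0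
        simp [hp1, hr0', hcast]
    have heq : y = p1 + ∑ i : Fin d, (c i : ℤ) • coneGen d k i := by
      funext i
      rw [Pi.add_apply, sum_coneGen_apply hd]
      by_cases hi : i.val < d - 1
      · rw [if_pos hi]
        have h1 : (c i : ℤ) = y i - q - ε := by
          simp only [hc, hi, if_true]
          exact Int.toNat_of_nonneg (hcnonneg i hi)
        have h2 : ((c ⟨d - 1, by omega⟩ : ℕ) : ℤ) = q := by
          rw [← hL, hcL]; exact Int.toNat_of_nonneg hq0
        have h3 : p1 i = ε := by
          by_cases hr0' : r = 0 <;> simp [hp1, hε, hr0', hi]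
        rw [h1, h2, h3]; ring
      · rw [if_neg hi]
        have hiL : i = L := by
          apply Fin.ext
          have := i.isLt
          show i.val = d - 1
          omega
        have h2 : ((c ⟨d - 1, by omega⟩ : ℕ) : ℤ) = q := by
          rw [← hL, hcL]; exact Int.toNat_of_nonneg hq0
        have h3 : p1 i = r := by
          by_cases hr0' : r = 0 <;> simp [hp1, hr0', hiL, hL]
        rw [h2, h3, hiL, hyL]
    refine ⟨⟨p1, c⟩, ⟨hform, heq⟩, ?_⟩
    rintro ⟨v, b⟩ ⟨hform', heq'⟩
    obtain ⟨k1, k2, k3⟩ := key hd hk y (v, b) hform' heq'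
    obtain ⟨m1, m2, m3⟩ := key hd hk y (p1, c) hform heq
    dsimp only at k1 k2 k3 m1 m2 m3
    have hv : v = p1 := offset_det hd hform' hform (by rw [k1, m1])
    have hb : b = c := by
      funext i
      by_cases hi : i.val < d - 1
      · have e1 := k3 i hi
        have e2 := m3 i hi
        rw [hv] at e1
        have : (b i : ℤ) = c i := by omega
        exact_mod_cast this
      · have hiL : i = (⟨d - 1, by omega⟩ : Fin d) := by
          apply Fin.ext
          have := i.isLt
          show i.val = d - 1
          omega
        rw [hiL]
        have : (b (⟨d - 1, by omega⟩ : Fin d) : ℤ) = c ⟨d - 1, by omega⟩ := by omega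
        exact_mod_cast this
    simp [hv, hb]
  · rintro ⟨⟨v, b⟩, ⟨hform, heq⟩, -⟩
    set L : Fin d := ⟨d - 1, by omega⟩ with hL
    obtain ⟨hb0, hbk⟩ := offset_last_bounds hd hk hform
    have hyL : y L = v L + k * b L := by
      have := congrFun heq L
      rwa [Pi.add_apply, sum_coneGen_apply hd, if_neg hnlt] at this
    have hyi : ∀ i : Fin d, i.val < d - 1 → y i = v i + ((b i : ℤ) + b L) := by
      intro i hi
      have := congrFun heq i
      rwa [Pi.add_apply, sum_coneGen_apply hd, if_pos hi] at this
    constructor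
    · intro i
      by_cases hi : i.val < d - 1
      · have h1 := hyi i hi
        have h2 : v i = if v L = 0 then 0 else 1 := offset_small hd hform i hi
        have hb1 : (0 : ℤ) ≤ b i := Int.ofNat_nonneg _
        have hb2 : (0 : ℤ) ≤ b L := Int.ofNat_nonneg _
        rw [h1, h2]
        split <;> omega
      · have hiL : i = L := by
          apply Fin.ext
          have := i.isLt
          show i.val = d - 1
          omega
        rw [hiL, hyL]
        have hb2 : (0 : ℤ) ≤ b L := Int.ofNat_nonneg _
        nlinarith
    · intro i hi
      have h1 := hyi i hi
      have h2 : v i = if v L = 0 then 0 else 1 := offset_small hd hform i hi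
      have hb1 : (0 : ℤ) ≤ b i := Int.ofNat_nonneg _
      have hb2 : (0 : ℤ) ≤ b L := Int.ofNat_nonneg _
      show y L ≤ (k : ℤ) * y i
      rw [hyL, h1, h2]
      by_cases hv0 : v L = 0
      · simp only [hv0, if_true]
        nlinarith
      · simp only [hv0, if_false]
        nlinarith
end

section
/- Let d ≥ 2 and k ≥ 3. Define Z(p, t) = ∑_{y ∈ ℤ≥0^d, k·y_i ≥ y_d ∀i<d} t^{(k+1)(y_1+⋯+y_{d−1}) − (d−2)y_d} where t = p^{−s}. Then there exist NO integers m, a, b such that substituting p → p^{−1} (equivalently X_i → X_i^{−1} for the variables X_i = p^{−(k+1)s} for i < d and X_d = p^{(d−2)s}) in the rational function Z yields (−1)^m p^{a+bs} Z. In other words, the rational function F(X_1,…,X_d) = (1 + X_1⋯X_d(1+X_d+⋯+X_d^{k−2}))/((1−X_1)⋯(1−X_{d−1})(1−X_1⋯X_{d−1}X_d^k)) does not satisfy F(X_1^{−1},…,X_d^{−1}) = ± X_1^{a_1}⋯X_d^{a_d} F(X_1,…,X_d) for any sign and integer exponents a_1,…,a_d of the specific form arising from a monomial p^{a+bs}.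 -/
/-- The field `ℚ(q, t)` of rational functions in two variables `q` and `t = p^{-s}`. -/
noncomputable abbrev QTField : Type := FractionRing (MvPolynomial (Fin 2) ℚ)

noncomputable def qVar : QTField := algebraMap (MvPolynomial (Fin 2) ℚ) QTField (MvPolynomial.X 0)

noncomputable def tVar : QTField := algebraMap (MvPolynomial (Fin 2) ℚ) QTField (MvPolynomial.X 1)

/-- The local zeta function `Z_{T_d, ρ_{d,k}, p}(s)` of the split torus `T_d` with
representation `ρ_{d,k}`, as a rational function of `t = p^{-s}`: it is
`F(X₁,…,X_d)` evaluated at `X_i = t^{k+1}` (`i < d`) and `X_d = t^{-(d-2)}`. -/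
noncomputable def Zdk (d k : ℕ) (t : QTField) : QTField :=
  (1 + t ^ ((k + 1) * (d - 1)) * t ^ (-((d : ℤ) - 2)) *
      ∑ j ∈ Finset.range (k - 1), (t ^ (-((d : ℤ) - 2))) ^ j) /
    ((1 - t ^ (k + 1)) ^ (d - 1) *
      (1 - t ^ ((k + 1) * (d - 1)) * (t ^ (-((d : ℤ) - 2))) ^ k))

open Polynomial in
private noncomputable def Sb (e m : ℕ) : ℚ[X] := ∑ j ∈ Finset.range (m+2), X ^ (e*j)

section KeyPoly
open Polynomial

private lemma Sb_natDegree_le (e m : ℕ) : (Sb e m).natDegree ≤ e*(m+1) := by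
  apply Polynomial.natDegree_sum_le_of_forall_le
  intro j hj
  simp only [Finset.mem_range] at hj
  calc (X ^ (e*j) : ℚ[X]).natDegree ≤ e*j := by simp [Polynomial.natDegree_X_pow]
    _ ≤ e*(m+1) := Nat.mul_le_mul_left e (by omega)

private lemma Sb_coeff_mul (e m : ℕ) (he : e ≠ 0) (j0 : ℕ) (hj0 : j0 < m+2) :
    (Sb e m).coeff (e*j0) = 1 := by
  rw [Sb, Polynomial.finset_sum_coeff]
  rw [Finset.sum_eq_single j0]
  · simp [Polynomial.coeff_X_pow]
  · intro b _ hb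
    rw [Polynomial.coeff_X_pow]
    have : e*j0 ≠ e*b := by
      simpa [mul_right_inj' he] using (Ne.symm hb)
    simp [this]
  · intro h; exact absurd (Finset.mem_range.mpr hj0) h

private lemma Sb_e0 (m : ℕ) : Sb 0 m = Polynomial.C ((m:ℚ)+2) := by
  have hc : ((m:ℚ)+2) = ((m+2 : ℕ) : ℚ) := by push_cast; ring
  rw [hc, Polynomial.C_eq_natCast]
  simp [Sb, Finset.sum_const]

/-- The key polynomial non-identity. -/
private lemma key_s3 (e m : ℕ) (α β : ℕ) (c : ℚ) (hc : c = 1 ∨ c = -1)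
    (h : (X:ℚ[X])^α * (X^((m+4)*(e+1)) + X^e * Sb e m)
       = Polynomial.C c * ((X:ℚ[X])^β * (X^(e*(m+2)) + X^((m+4)*(e+1)) * Sb e m))) :
    False := by
  have hcne : c ≠ 0 := by rcases hc with rfl | rfl <;> norm_num
  rcases Nat.eq_zero_or_pos e with he | he
  · -- e = 0 case
    subst he
    rw [Sb_e0] at h
    simp only [Nat.zero_mul, pow_zero, one_mul] at h
    have h1 := congrArg Polynomial.leadingCoeff h
    have hmono : ((X:ℚ[X])^((m+4)*(0+1)) + Polynomial.C ((m:ℚ)+2)).Monic := by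
      have := Polynomial.monic_X_pow_add_C ((m:ℚ)+2) (n := (m+4)*(0+1)) (by omega)
      simpa using this
    have h2 : ((1:ℚ[X]) + X^((m+4)*(0+1)) * Polynomial.C ((m:ℚ)+2)).leadingCoeff
        = (m:ℚ)+2 := by
      have hrw : (1:ℚ[X]) + X^((m+4)*(0+1)) * Polynomial.C ((m:ℚ)+2)
          = 1 + Polynomial.C ((m:ℚ)+2) * X^((m+4)*(0+1)) := by ring
      rw [hrw, Polynomial.leadingCoeff_add_of_degree_lt, Polynomial.leadingCoeff_C_mul_X_pow]
      rw [Polynomial.degree_C_mul_X_pow _ (by positivity : (m:ℚ)+2 ≠ 0)]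
      exact lt_of_le_of_lt Polynomial.degree_one_le (by exact_mod_cast (by omega : 0 < (m+4)*(0+1)))
    rw [Polynomial.leadingCoeff_mul, Polynomial.leadingCoeff_mul, Polynomial.leadingCoeff_mul,
      Polynomial.leadingCoeff_X_pow, hmono.leadingCoeff, Polynomial.leadingCoeff_X_pow,
      Polynomial.leadingCoeff_C, h2] at h1
    rcases hc with rfl | rfl <;>
      nlinarith [h1, (Nat.cast_nonneg m : (0:ℚ) ≤ m)]
  · -- e ≥ 1 case
    have hene : e ≠ 0 := by omega
    set Kn := (m+4)*(e+1) with hKn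
    set L0 : ℚ[X] := X^Kn + X^e * Sb e m with hL0
    set R0 : ℚ[X] := X^(e*(m+2)) + X^Kn * Sb e m with hR0
    have hdSL : ((X:ℚ[X])^e * Sb e m).natDegree ≤ e*(m+2) := by
      calc ((X:ℚ[X])^e * Sb e m).natDegree ≤ e + (Sb e m).natDegree :=
            le_trans (Polynomial.natDegree_mul_le) (by simp [Polynomial.natDegree_X_pow])
        _ ≤ e + e*(m+1) := by have := Sb_natDegree_le e m; omega
        _ ≤ e*(m+2) := by ring_nf; omega
    have hlt1 : e*(m+2) < Kn := by rw [hKn]; nlinarith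
    have hL0top : L0.coeff Kn = 1 := by
      rw [hL0, Polynomial.coeff_add, Polynomial.coeff_X_pow,
        Polynomial.coeff_eq_zero_of_natDegree_lt (lt_of_le_of_lt hdSL hlt1)]
      simp
    have hL0deg : L0.natDegree = Kn := by
      apply le_antisymm
      · rw [hL0]
        apply le_trans (Polynomial.natDegree_add_le _ _)
        simp only [sup_le_iff]
        exact ⟨by simp [Polynomial.natDegree_X_pow], le_trans hdSL (le_of_lt hlt1)⟩
      · exact Polynomial.le_natDegree_of_ne_zero (by rw [hL0top]; norm_num)
    have hL0lead : L0.leadingCoeff = 1 := by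
      rw [Polynomial.leadingCoeff, hL0deg, hL0top]
    have hR0top : R0.coeff (Kn + e*(m+1)) = 1 := by
      rw [hR0, Polynomial.coeff_add]
      have h1 : ((X:ℚ[X])^(e*(m+2))).coeff (Kn + e*(m+1)) = 0 := by
        rw [Polynomial.coeff_X_pow]
        have : Kn + e*(m+1) ≠ e*(m+2) := by omega
        simp [this]
      have h2 : ((X:ℚ[X])^Kn * Sb e m).coeff (e*(m+1) + Kn) = (Sb e m).coeff (e*(m+1)) :=
        Polynomial.coeff_X_pow_mul _ _ _
      rw [h1, show Kn + e*(m+1) = e*(m+1) + Kn by omega, h2,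
        Sb_coeff_mul e m hene (m+1) (by omega)]
      norm_num
    have hR0deg : R0.natDegree = Kn + e*(m+1) := by
      apply le_antisymm
      · rw [hR0]
        apply le_trans (Polynomial.natDegree_add_le _ _)
        simp only [sup_le_iff]
        constructor
        · simp only [Polynomial.natDegree_X_pow]; omega
        · calc ((X:ℚ[X])^Kn * Sb e m).natDegree ≤ Kn + (Sb e m).natDegree :=
              le_trans (Polynomial.natDegree_mul_le) (by simp [Polynomial.natDegree_X_pow])
            _ ≤ Kn + e*(m+1) := by have := Sb_natDegree_le e m; omega
      · exact Polynomial.le_natDegree_of_ne_zero (by rw [hR0top]; norm_num)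
    have hR0lead : R0.leadingCoeff = 1 := by
      rw [Polynomial.leadingCoeff, hR0deg, hR0top]
    have hL0ne : L0 ≠ 0 := fun hz => by simp [hz] at hL0top
    have hR0ne : R0 ≠ 0 := fun hz => by simp [hz] at hR0top
    have h1 := congrArg Polynomial.leadingCoeff h
    rw [Polynomial.leadingCoeff_mul, Polynomial.leadingCoeff_mul, Polynomial.leadingCoeff_mul,
      Polynomial.leadingCoeff_X_pow, Polynomial.leadingCoeff_X_pow, Polynomial.leadingCoeff_C,
      hL0lead, hR0lead] at h1
    have hc1 : c = 1 := by linarith [h1]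
    subst hc1
    rw [Polynomial.C_1, one_mul] at h
    have h2 := congrArg Polynomial.natDegree h
    rw [Polynomial.natDegree_mul (pow_ne_zero _ Polynomial.X_ne_zero) hL0ne,
      Polynomial.natDegree_mul (pow_ne_zero _ Polynomial.X_ne_zero) hR0ne,
      Polynomial.natDegree_X_pow, Polynomial.natDegree_X_pow, hL0deg, hR0deg] at h2
    have hab : α = β + e*(m+1) := by omega
    have h3 := congrArg (fun p => Polynomial.coeff p (α + 2*e)) h
    have hLHS : ((X:ℚ[X])^α * L0).coeff (α + 2*e) = 1 := by
      rw [show α + 2*e = 2*e + α by omega, Polynomial.coeff_X_pow_mul]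
      rw [hL0, Polynomial.coeff_add]
      have hx1 : ((X:ℚ[X])^Kn).coeff (2*e) = 0 := by
        rw [Polynomial.coeff_X_pow]
        have hlt2 : 2*e < Kn := by rw [hKn]; nlinarith
        have : 2*e ≠ Kn := by omega
        simp [this]
      have hx2 : ((X:ℚ[X])^e * Sb e m).coeff (e + e) = (Sb e m).coeff e :=
        Polynomial.coeff_X_pow_mul _ _ _
      rw [hx1, show 2*e = e + e by omega, hx2]
      have := Sb_coeff_mul e m hene 1 (by omega)
      simpa using this
    have hRHS : ((X:ℚ[X])^β * R0).coeff (α + 2*e) = 0 := by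
      rw [show α + 2*e = (e*(m+3)) + β by rw [hab]; ring, Polynomial.coeff_X_pow_mul]
      rw [hR0, Polynomial.coeff_add]
      have hy1 : ((X:ℚ[X])^(e*(m+2))).coeff (e*(m+3)) = 0 := by
        rw [Polynomial.coeff_X_pow]
        have : e*(m+3) ≠ e*(m+2) := by
          have := (Nat.mul_lt_mul_left he).mpr (show m+2 < m+3 by omega)
          omega
        simp [this]
      have hy2 : ((X:ℚ[X])^Kn * Sb e m).coeff (e*(m+3)) = 0 := by
        rw [mul_comm, Polynomial.coeff_mul_X_pow']
        have : ¬ Kn ≤ e*(m+3) := by rw [hKn]; push_neg; nlinarith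
        simp [this]
      rw [hy1, hy2]
      norm_num
    rw [hLHS, hRHS] at h3
    norm_num at h3
end KeyPoly

section FieldFacts

private lemma hinj : Function.Injective (algebraMap (MvPolynomial (Fin 2) ℚ) QTField) :=
  IsFractionRing.injective _ _

private lemma ht_ne : tVar ≠ 0 := by
  rw [tVar, Ne, map_eq_zero_iff _ hinj]
  exact MvPolynomial.X_ne_zero 1

private lemma hq_ne : qVar ≠ 0 := by
  rw [qVar, Ne, map_eq_zero_iff _ hinj]
  exact MvPolynomial.X_ne_zero 0

private lemma one_sub_tpow_ne (n : ℕ) (hn : n ≠ 0) : (1:QTField) - tVar ^ n ≠ 0 := by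
  have hpoly : (1 : MvPolynomial (Fin 2) ℚ) - MvPolynomial.X 1 ^ n ≠ 0 := by
    intro hz
    have h2 := congrArg (MvPolynomial.eval (fun _ => (0:ℚ))) hz
    simp [zero_pow hn] at h2
  have : (1:QTField) - tVar ^ n
      = algebraMap (MvPolynomial (Fin 2) ℚ) QTField (1 - MvPolynomial.X 1 ^ n) := by
    simp [tVar, map_sub, map_pow]
  rw [this, Ne, map_eq_zero_iff _ hinj]
  exact hpoly

private lemma tpow_ne_one (n : ℕ) (hn : n ≠ 0) : tVar ^ n ≠ 1 := by
  intro h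
  exact one_sub_tpow_ne n hn (by rw [h, sub_self])

private lemma one_sub_tpow_inv_ne (n : ℕ) (hn : n ≠ 0) : (1:QTField) - (tVar ^ n)⁻¹ ≠ 0 := by
  intro h
  have h2 : ((tVar ^ n)⁻¹ : QTField) = 1 := (sub_eq_zero.mp h).symm
  exact tpow_ne_one n hn (inv_eq_one.mp h2)

variable (e w : ℕ)

private lemma hsplit : tVar ^ ((w+4)*(e+1)) = tVar ^ (e*(w+3)) * tVar ^ (e+w+4) := by
  rw [← pow_add]; congr 1; ring

private lemma hsum1 : ∑ j ∈ Finset.range (w+2), ((tVar^e)⁻¹)^j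
    = (tVar^(e*(w+1)))⁻¹ * ∑ j ∈ Finset.range (w+2), tVar^(e*j) := by
  rw [Finset.mul_sum, ← Finset.sum_range_reflect (fun j => (tVar^(e*(w+1)))⁻¹ * tVar^(e*j)) (w+2)]
  apply Finset.sum_congr rfl
  intro j hj
  simp only [Finset.mem_range] at hj
  have hj' : e*(w+2-1-j) + e*j = e*(w+1) := by
    rw [← Nat.mul_add]; congr 1; omega
  have hA : (tVar:QTField)^(e*(w+2-1-j)) ≠ 0 := pow_ne_zero _ ht_ne
  rw [inv_pow, ← pow_mul, ← hj', pow_add, mul_inv, mul_right_comm, inv_mul_cancel₀ hA, one_mul]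

private lemma hsum2 : ∑ j ∈ Finset.range (w+2), (tVar^e)^j
    = ∑ j ∈ Finset.range (w+2), tVar^(e*j) := by
  apply Finset.sum_congr rfl
  intro j _
  rw [← pow_mul]

private noncomputable def Dfac : QTField :=
  (1 - tVar^(w+4))^(e+1) * (tVar^(e*(w+3)) - tVar^((w+4)*(e+1)))

private lemma hZt : Zdk (e+2) (w+3) tVar * Dfac e w
    = tVar^e * (tVar^(e*(w+2)) + tVar^((w+4)*(e+1)) * ∑ j ∈ Finset.range (w+2), tVar^(e*j)) := by
  rw [Zdk, Dfac]
  simp only [show w+3+1 = w+4 from by omega, show e+2-1 = e+1 from by omega,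
    show w+3-1 = w+2 from by omega,
    show -(((e+2:ℕ):ℤ) - 2) = -(e:ℤ) from by push_cast; ring,
    zpow_neg, zpow_natCast]
  rw [hsum1 e w]
  have hNum : tVar^((w+4)*(e+1)) * (tVar^e)⁻¹ *
      ((tVar^(e*(w+1)))⁻¹ * ∑ j ∈ Finset.range (w+2), tVar^(e*j))
      = tVar^(2*e+w+4) * ∑ j ∈ Finset.range (w+2), tVar^(e*j) := by
    rw [show (w+4)*(e+1) = (2*e+w+4) + (e + e*(w+1)) from by ring, pow_add, pow_add]
    have h1 : (tVar:QTField)^e ≠ 0 := pow_ne_zero _ ht_ne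
    have h2 : (tVar:QTField)^(e*(w+1)) ≠ 0 := pow_ne_zero _ ht_ne
    field_simp
    ring
  rw [hNum]
  have hB2 : (1:QTField) - tVar^((w+4)*(e+1)) * ((tVar^e)⁻¹)^(w+3) = 1 - tVar^(e+w+4) := by
    congr 1
    rw [inv_pow, ← pow_mul, hsplit e w, mul_comm (tVar^(e*(w+3))) _,
      mul_inv_cancel_right₀ (pow_ne_zero _ ht_ne)]
  rw [hB2]
  have hBne : ((1:QTField) - tVar^(w+4))^(e+1) * (1 - tVar^(e+w+4)) ≠ 0 :=
    mul_ne_zero (pow_ne_zero _ (one_sub_tpow_ne _ (by omega))) (one_sub_tpow_ne _ (by omega))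
  rw [div_mul_eq_mul_div, div_eq_iff hBne]
  ring

private lemma hZt' : Zdk (e+2) (w+3) tVar⁻¹ * Dfac e w
    = (-(tVar^(w+4)))^(e+1) *
      (-(tVar^((w+4)*(e+1)) + tVar^e * ∑ j ∈ Finset.range (w+2), tVar^(e*j))) := by
  rw [Zdk, Dfac]
  simp only [show w+3+1 = w+4 from by omega, show e+2-1 = e+1 from by omega,
    show w+3-1 = w+2 from by omega,
    show -(((e+2:ℕ):ℤ) - 2) = -(e:ℤ) from by push_cast; ring,
    zpow_neg, zpow_natCast, inv_pow, inv_inv]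
  rw [hsum2 e w]
  set S := ∑ j ∈ Finset.range (w+2), tVar^(e*j) with hS
  have hKnne : (tVar^((w+4)*(e+1)) : QTField) ≠ 0 := pow_ne_zero _ ht_ne
  have hB4 : (1:QTField) - (tVar^(w+4))⁻¹ = (-(tVar^(w+4)))⁻¹ * (1 - tVar^(w+4)) := by
    rw [inv_neg, neg_mul, mul_sub, mul_one, mul_comm,
      mul_inv_cancel₀ (pow_ne_zero _ ht_ne)]
    ring
  rw [hB4, mul_pow, inv_pow, ← pow_mul tVar e (w+3)]
  have hYne : ((-(tVar^(w+4)))^(e+1) : QTField) ≠ 0 :=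
    pow_ne_zero _ (neg_ne_zero.mpr (pow_ne_zero _ ht_ne))
  have hNum' : (1:QTField) + (tVar^((w+4)*(e+1)))⁻¹ * tVar^e * S
      = (tVar^((w+4)*(e+1)) + tVar^e * S) * (tVar^((w+4)*(e+1)))⁻¹ := by
    rw [add_mul (tVar^((w+4)*(e+1))) (tVar^e * S) ((tVar^((w+4)*(e+1)))⁻¹),
      mul_inv_cancel₀ hKnne]
    ring
  have hDen2 : (1:QTField) - (tVar^((w+4)*(e+1)))⁻¹ * tVar^(e*(w+3))
      = (tVar^((w+4)*(e+1)) - tVar^(e*(w+3))) * (tVar^((w+4)*(e+1)))⁻¹ := by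
    rw [sub_mul (tVar^((w+4)*(e+1))) (tVar^(e*(w+3))) ((tVar^((w+4)*(e+1)))⁻¹),
      mul_inv_cancel₀ hKnne]
    ring
  rw [hNum', hDen2, ← mul_assoc (((-(tVar^(w+4)))^(e+1))⁻¹ * (1 - tVar^(w+4))^(e+1)),
    mul_div_mul_right _ _ (inv_ne_zero hKnne)]
  have hsubne : (tVar^((w+4)*(e+1)) : QTField) - tVar^(e*(w+3)) ≠ 0 := by
    rw [hsplit e w]
    have hfac : (tVar^(e*(w+3)) * tVar^(e+w+4) : QTField) - tVar^(e*(w+3))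
        = tVar^(e*(w+3)) * (tVar^(e+w+4) - 1) := by ring
    rw [hfac]
    refine mul_ne_zero (pow_ne_zero _ ht_ne) (sub_ne_zero.mpr ?_)
    intro hone
    exact one_sub_tpow_ne (e+w+4) (by omega) (by rw [hone, sub_self])
  have hden : (((-(tVar^(w+4)))^(e+1))⁻¹ * ((1:QTField) - tVar^(w+4))^(e+1) *
      (tVar^((w+4)*(e+1)) - tVar^(e*(w+3)))) ≠ 0 :=
    mul_ne_zero (mul_ne_zero (inv_ne_zero hYne)
      (pow_ne_zero _ (one_sub_tpow_ne _ (by omega)))) hsubne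
  rw [div_mul_eq_mul_div, div_eq_iff hden]
  have hY : ((-(tVar^(w+4)))^(e+1) : QTField) * ((-(tVar^(w+4)))^(e+1))⁻¹ = 1 :=
    mul_inv_cancel₀ hYne
  linear_combination ((1 - tVar^(w+4))^(e+1) * (tVar^((w+4)*(e+1)) + tVar^e * S) *
      (tVar^((w+4)*(e+1)) - tVar^(e*(w+3)))) * hY

end FieldFacts

/-- There are no integers `m, a, b` such that `Z|_{p→p⁻¹} = (−1)^m p^{a+bs} Z`:
substituting `p → p⁻¹` (i.e. `t → t⁻¹`) does not transform `Z` by a sign times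
a monomial `p^a t^{-b}`. -/
theorem stmt3 (d k : ℕ) (hd : 2 ≤ d) (hk : 3 ≤ k) :
    ¬ ∃ (m a b : ℤ),
        Zdk d k tVar⁻¹ = (-1 : QTField) ^ m * qVar ^ a * tVar ^ (-b) * Zdk d k tVar := by
  rintro ⟨mz, a, b, H⟩
  obtain ⟨e, rfl⟩ : ∃ e, d = e + 2 := ⟨d - 2, by omega⟩
  obtain ⟨w, rfl⟩ : ∃ w, k = w + 3 := ⟨k - 3, by omega⟩
  have hE0 : (-(tVar^(w+4)))^(e+1) *
      (-(tVar^((w+4)*(e+1)) + tVar^e * ∑ j ∈ Finset.range (w+2), tVar^(e*j)))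
      = (-1:QTField)^mz * qVar^a * tVar^(-b) *
        (tVar^e * (tVar^(e*(w+2)) + tVar^((w+4)*(e+1)) * ∑ j ∈ Finset.range (w+2), tVar^(e*j))) := by
    rw [← hZt' e w, H,
      mul_assoc ((-1:QTField)^mz * qVar^a * tVar^(-b)) (Zdk (e+2) (w+3) tVar) (Dfac e w),
      hZt e w]
  obtain ⟨A1, A2, hA⟩ : ∃ A1 A2 : ℕ, a + (A2:ℤ) = (A1:ℤ) := ⟨a.toNat, (-a).toNat, by omega⟩
  obtain ⟨B1, B2, hB⟩ : ∃ B1 B2 : ℕ, -b + (B1:ℤ) = (B2:ℤ) := ⟨b.toNat, (-b).toNat, by omega⟩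
  have hqq : qVar^a * qVar^A2 = qVar^A1 := by
    rw [← zpow_natCast qVar A2, ← zpow_natCast qVar A1, ← zpow_add₀ hq_ne, hA]
  have htt : tVar^(-b) * tVar^B1 = tVar^B2 := by
    rw [← zpow_natCast tVar B1, ← zpow_natCast tVar B2, ← zpow_add₀ ht_ne, hB]
  have hE1 : (-(tVar^(w+4)))^(e+1) *
      (-(tVar^((w+4)*(e+1)) + tVar^e * ∑ j ∈ Finset.range (w+2), tVar^(e*j))) *
      (qVar^A2 * tVar^B1)
      = (-1:QTField)^mz * (qVar^A1 * (tVar^B2 *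
        (tVar^e * (tVar^(e*(w+2)) + tVar^((w+4)*(e+1)) * ∑ j ∈ Finset.range (w+2), tVar^(e*j))))) := by
    rw [hE0]
    linear_combination ((-1:QTField)^mz * tVar^(-b) *
        (tVar^e * (tVar^(e*(w+2)) + tVar^((w+4)*(e+1)) * ∑ j ∈ Finset.range (w+2), tVar^(e*j))) *
        tVar^B1) * hqq +
      ((-1:QTField)^mz * qVar^A1 *
        (tVar^e * (tVar^(e*(w+2)) + tVar^((w+4)*(e+1)) * ∑ j ∈ Finset.range (w+2), tVar^(e*j)))) * htt
  have hc0 : (-1:QTField)^mz = 1 ∨ (-1:QTField)^mz = -1 := by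
    rcases Int.even_or_odd mz with hmz | hmz
    · exact Or.inl hmz.neg_one_zpow
    · exact Or.inr hmz.neg_one_zpow
  -- rewrite tVar, qVar as algebra map images inside hE1
  have hqv : qVar = algebraMap (MvPolynomial (Fin 2) ℚ) QTField (MvPolynomial.X 0) := rfl
  have htv : tVar = algebraMap (MvPolynomial (Fin 2) ℚ) QTField (MvPolynomial.X 1) := rfl
  rw [hqv, htv] at hE1
  set ι := algebraMap (MvPolynomial (Fin 2) ℚ) QTField with hι
  set XX : MvPolynomial (Fin 2) ℚ := MvPolynomial.X 1 with hXX
  set QQ : MvPolynomial (Fin 2) ℚ := MvPolynomial.X 0 with hQQ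
  -- the polynomial images
  have hφ := fun (p q : MvPolynomial (Fin 2) ℚ) (hpq : p = q) =>
    congrArg (MvPolynomial.aeval (R := ℚ) ![(1 : Polynomial ℚ), Polynomial.X]) hpq
  rcases hc0 with hc0 | hc0 <;> rw [hc0] at hE1
  · -- (-1)^mz = 1
    have hmv : (-(XX^(w+4)))^(e+1) *
        (-(XX^((w+4)*(e+1)) + XX^e * ∑ j ∈ Finset.range (w+2), XX^(e*j))) *
        (QQ^A2 * XX^B1)
        = QQ^A1 * (XX^B2 *
          (XX^e * (XX^(e*(w+2)) + XX^((w+4)*(e+1)) * ∑ j ∈ Finset.range (w+2), XX^(e*j)))) := by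
      apply hinj
      simp only [map_mul, map_neg, map_add, map_pow, map_sum]
      linear_combination hE1
    have hpoly := hφ _ _ hmv
    simp only [map_mul, map_neg, map_add, map_pow, map_sum, MvPolynomial.aeval_X,
      hXX, hQQ, Matrix.cons_val_zero, Matrix.cons_val_one, Matrix.head_cons,
      one_pow, one_mul] at hpoly
    rw [neg_pow (Polynomial.X^(w+4) : Polynomial ℚ) (e+1), ← pow_mul] at hpoly
    rcases Nat.even_or_odd e with he2 | he2
    · rw [(he2.add_one).neg_one_pow] at hpoly
      refine key_s3 e w ((w+4)*(e+1) + B1) (B2 + e) 1 (Or.inl rfl) ?_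
      simp only [Sb, map_one]
      linear_combination hpoly
    · rw [(he2.add_one).neg_one_pow] at hpoly
      refine key_s3 e w ((w+4)*(e+1) + B1) (B2 + e) (-1) (Or.inr rfl) ?_
      simp only [Sb, map_neg, map_one]
      linear_combination -hpoly
  · -- (-1)^mz = -1
    have hmv : (-(XX^(w+4)))^(e+1) *
        (-(XX^((w+4)*(e+1)) + XX^e * ∑ j ∈ Finset.range (w+2), XX^(e*j))) *
        (QQ^A2 * XX^B1)
        = -(QQ^A1 * (XX^B2 *
          (XX^e * (XX^(e*(w+2)) + XX^((w+4)*(e+1)) * ∑ j ∈ Finset.range (w+2), XX^(e*j))))) := by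
      apply hinj
      simp only [map_mul, map_neg, map_add, map_pow, map_sum]
      linear_combination hE1
    have hpoly := hφ _ _ hmv
    simp only [map_mul, map_neg, map_add, map_pow, map_sum, MvPolynomial.aeval_X,
      hXX, hQQ, Matrix.cons_val_zero, Matrix.cons_val_one, Matrix.head_cons,
      one_pow, one_mul] at hpoly
    rw [neg_pow (Polynomial.X^(w+4) : Polynomial ℚ) (e+1), ← pow_mul] at hpoly
    rcases Nat.even_or_odd e with he2 | he2
    · rw [(he2.add_one).neg_one_pow] at hpoly
      refine key_s3 e w ((w+4)*(e+1) + B1) (B2 + e) (-1) (Or.inr rfl) ?_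
      simp only [Sb, map_neg, map_one]
      linear_combination hpoly
    · rw [(he2.add_one).neg_one_pow] at hpoly
      refine key_s3 e w ((w+4)*(e+1) + B1) (B2 + e) 1 (Or.inl rfl) ?_
      simp only [Sb, map_one]
      linear_combination -hpoly
end

section
/- Let H be a hyperplane in ℝ^m (zero set of a nonzero linear form) and let F ⊆ ℝ^m be a convex set which is open in its affine/linear span, with F ∩ H ≠ ∅ and F ⊄ H. Then F ∩ H^> ≠ ∅, F ∩ H^< ≠ ∅, and dim(F ∩ H^>) = dim(F ∩ H^<) = dim(F ∩ H) + 1 = dim F, where dim denotes the dimension of the linear span and H^>, H^< are the open half-spaces defined by the linear form. -/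
/-- The linear functional `v ↦ ∑ i, v i * w i`. -/
def phi5 {m : ℕ} (w : Fin m → ℝ) : (Fin m → ℝ) →ₗ[ℝ] ℝ where
  toFun v := ∑ i, v i * w i
  map_add' a b := by simp [add_mul, Finset.sum_add_distrib]
  map_smul' c a := by simp [Finset.mul_sum, mul_assoc]

lemma key5 {m : ℕ} (F : Set (Fin m → ℝ))
    (hopen : IsOpen {x : Submodule.span ℝ F | (x : Fin m → ℝ) ∈ F})
    {x v : Fin m → ℝ} (hx : x ∈ F) (hv : v ∈ Submodule.span ℝ F) :
    ∃ ε > 0, ∀ t : ℝ, |t| < ε → x + t • v ∈ F := by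
  set S := Submodule.span ℝ F with hS
  have hxS : x ∈ S := Submodule.subset_span hx
  set g : ℝ → S := fun t => ⟨x + t • v, S.add_mem hxS (S.smul_mem t hv)⟩ with hgdef
  have hg : Continuous g := Continuous.subtype_mk (by fun_prop) _
  have hU : IsOpen (g ⁻¹' {y : S | (y : Fin m → ℝ) ∈ F}) := hopen.preimage hg
  have h0 : (0 : ℝ) ∈ g ⁻¹' {y : S | (y : Fin m → ℝ) ∈ F} := by
    simp only [Set.mem_preimage, hgdef, Set.mem_setOf_eq, zero_smul, add_zero]
    exact hx
  rcases Metric.isOpen_iff.1 hU 0 h0 with ⟨ε, hε, hball⟩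
  refine ⟨ε, hε, fun t ht => ?_⟩
  have : t ∈ Metric.ball (0:ℝ) ε := by simpa [Real.dist_eq] using ht
  exact hball this

lemma half5 {m : ℕ} (F : Set (Fin m → ℝ)) (hconv : Convex ℝ F)
    (f : (Fin m → ℝ) →ₗ[ℝ] ℝ) {p : Fin m → ℝ} (hp : p ∈ F) (hfp : 0 < f p) :
    Submodule.span ℝ (F ∩ {v | 0 < f v}) = Submodule.span ℝ F := by
  refine le_antisymm (Submodule.span_mono Set.inter_subset_left)
    (Submodule.span_le.2 fun z hz => ?_)
  by_cases hfz : 0 < f z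
  · exact Submodule.subset_span ⟨hz, hfz⟩
  · push_neg at hfz
    have hd : 0 < f p - f z := by linarith
    set t : ℝ := f p / (2 * (f p - f z)) with htdef
    have ht0 : 0 < t := by positivity
    have ht1 : t ≤ 1 := by
      rw [htdef, div_le_one (by positivity)]; linarith
    set u := (1 - t) • p + t • z with hu
    have huF : u ∈ F := hconv hp hz (by linarith) (le_of_lt ht0) (by ring)
    have hfu : 0 < f u := by
      have h1 : f u = (1 - t) * f p + t * f z := by
        rw [hu]; simp [map_add, map_smul]
      have h2 : t * (f p - f z) = f p / 2 := by
        rw [htdef]; field_simp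
      nlinarith
    have hzA : z = t⁻¹ • (u - (1 - t) • p) := by
      rw [hu, add_sub_cancel_left, inv_smul_smul₀ (ne_of_gt ht0)]
    rw [hzA]
    exact Submodule.smul_mem _ _ (Submodule.sub_mem _
      (Submodule.subset_span ⟨huF, hfu⟩)
      (Submodule.smul_mem _ _ (Submodule.subset_span ⟨hp, hfp⟩)))

/-- Let `H = {v : v·w = 0}` be a hyperplane and `F` a convex set, open in its
linear span, meeting `H` but not contained in it. Then `F` meets both open
half-spaces and `dim(F∩H^>) = dim(F∩H^<) = dim(F∩H) + 1 = dim F`. -/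
theorem stmt5 (m : ℕ) (w : Fin m → ℝ) (hw : w ≠ 0) (F : Set (Fin m → ℝ))
    (hconv : Convex ℝ F)
    (hopen : IsOpen {x : Submodule.span ℝ F | (x : Fin m → ℝ) ∈ F})
    (hmeet : (F ∩ {v | ∑ i, v i * w i = 0}).Nonempty)
    (hnsub : ¬ F ⊆ {v | ∑ i, v i * w i = 0}) :
    (F ∩ {v | 0 < ∑ i, v i * w i}).Nonempty ∧
    (F ∩ {v | ∑ i, v i * w i < 0}).Nonempty ∧
    Module.finrank ℝ (Submodule.span ℝ (F ∩ {v | 0 < ∑ i, v i * w i})) =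
      Module.finrank ℝ (Submodule.span ℝ F) ∧
    Module.finrank ℝ (Submodule.span ℝ (F ∩ {v | ∑ i, v i * w i < 0})) =
      Module.finrank ℝ (Submodule.span ℝ F) ∧
    Module.finrank ℝ (Submodule.span ℝ (F ∩ {v | ∑ i, v i * w i = 0})) + 1 =
      Module.finrank ℝ (Submodule.span ℝ F) := by
  set f : (Fin m → ℝ) →ₗ[ℝ] ℝ := phi5 w with hfdef
  obtain ⟨x, hxF, hx0⟩ := hmeet
  have hx0' : f x = 0 := hx0
  obtain ⟨y, hyF, hy0⟩ := Set.not_subset.1 hnsub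
  have hy0' : f y ≠ 0 := hy0
  have hv : y - x ∈ Submodule.span ℝ F :=
    Submodule.sub_mem _ (Submodule.subset_span hyF) (Submodule.subset_span hxF)
  obtain ⟨ε, hε, hball⟩ := key5 F hopen hxF hv
  have hval : ∀ t : ℝ, f (x + t • (y - x)) = t * f y := by
    intro t
    simp [map_add, map_smul, map_sub, hx0']
  have hpos : ∃ p, p ∈ F ∧ 0 < f p := by
    rcases hy0'.lt_or_gt with h | h
    · refine ⟨x + (-(ε/2)) • (y - x), hball _ ?_, ?_⟩
      · rw [abs_neg, abs_of_pos (by linarith)]; linarith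
      · rw [hval]; nlinarith
    · refine ⟨x + (ε/2) • (y - x), hball _ ?_, ?_⟩
      · rw [abs_of_pos (by linarith)]; linarith
      · rw [hval]; nlinarith
  have hneg : ∃ p, p ∈ F ∧ f p < 0 := by
    rcases hy0'.lt_or_gt with h | h
    · refine ⟨x + (ε/2) • (y - x), hball _ ?_, ?_⟩
      · rw [abs_of_pos (by linarith)]; linarith
      · rw [hval]; nlinarith
    · refine ⟨x + (-(ε/2)) • (y - x), hball _ ?_, ?_⟩
      · rw [abs_neg, abs_of_pos (by linarith)]; linarith
      · rw [hval]; nlinarith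
  obtain ⟨yp, hypF, hyp⟩ := hpos
  obtain ⟨ym, hymF, hym⟩ := hneg
  have h1 : Submodule.span ℝ (F ∩ {v | 0 < f v}) = Submodule.span ℝ F :=
    half5 F hconv f hypF hyp
  have h2 : Submodule.span ℝ (F ∩ {v | f v < 0}) = Submodule.span ℝ F := by
    have hset : {v : Fin m → ℝ | f v < 0} = {v | 0 < (-f) v} := by
      ext v; simp
    rw [hset]
    exact half5 F hconv (-f) hymF (by simpa using hym)
  -- the kernel part
  set S := Submodule.span ℝ F with hS
  have hK : Submodule.span ℝ (F ∩ {v | f v = 0}) = LinearMap.ker f ⊓ S := by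
    refine le_antisymm (Submodule.span_le.2 fun v hv => ?_) (fun v hv => ?_)
    · exact Submodule.mem_inf.2 ⟨hv.2, Submodule.subset_span hv.1⟩
    · obtain ⟨hvk, hvS⟩ := Submodule.mem_inf.1 hv
      obtain ⟨δ, hδ, hball'⟩ := key5 F hopen hxF hvS
      have huF : x + (δ/2) • v ∈ F := hball' _ (by rw [abs_of_pos (by linarith)]; linarith)
      have hfu : f (x + (δ/2) • v) = 0 := by
        simp [map_add, map_smul, hx0', LinearMap.mem_ker.1 hvk]
      have hveq : v = (δ/2)⁻¹ • ((x + (δ/2) • v) - x) := by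
        rw [add_sub_cancel_left, inv_smul_smul₀ (by positivity)]
      rw [hveq]
      exact Submodule.smul_mem _ _ (Submodule.sub_mem _
        (Submodule.subset_span ⟨huF, hfu⟩)
        (Submodule.subset_span ⟨hxF, hx0'⟩))
  have hker : Module.finrank ℝ (Submodule.span ℝ (F ∩ {v | f v = 0})) + 1 =
      Module.finrank ℝ S := by
    have hf' : LinearMap.range (f.comp S.subtype) = ⊤ := by
      rw [LinearMap.range_eq_top]
      intro r
      have hc : f yp ≠ 0 := ne_of_gt hyp
      refine ⟨(r / f yp) • ⟨yp, Submodule.subset_span hypF⟩, ?_⟩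
      simp [LinearMap.comp_apply, map_smul]
      field_simp
    have hrn := LinearMap.finrank_range_add_finrank_ker (f.comp S.subtype)
    rw [hf'] at hrn
    have hktop : Module.finrank ℝ (⊤ : Submodule ℝ ℝ) = 1 := by
      simp [finrank_top]
    rw [hktop] at hrn
    have hkc : LinearMap.ker (f.comp S.subtype) = Submodule.comap S.subtype (LinearMap.ker f) :=
      LinearMap.ker_comp _ _
    have hcc : Submodule.comap S.subtype (LinearMap.ker f) =
        Submodule.comap S.subtype (LinearMap.ker f ⊓ S) := by
      rw [Submodule.comap_inf, Submodule.comap_subtype_self, inf_top_eq]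
    have heq : Module.finrank ℝ (LinearMap.ker (f.comp S.subtype)) =
        Module.finrank ℝ (LinearMap.ker f ⊓ S : Submodule ℝ (Fin m → ℝ)) := by
      rw [hkc, hcc]
      exact (Submodule.comapSubtypeEquivOfLe inf_le_right).finrank_eq
    rw [hK]
    rw [heq] at hrn
    omega
  refine ⟨⟨yp, hypF, hyp⟩, ⟨ym, hymF, hym⟩, ?_, ?_, ?_⟩
  · show Module.finrank ℝ (Submodule.span ℝ (F ∩ {v | 0 < f v})) = _
    rw [h1]
  · show Module.finrank ℝ (Submodule.span ℝ (F ∩ {v | f v < 0})) = _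
    rw [h2]
  · exact hker
end

section
/- Let F ⊆ ℝ^m be a relatively open convex set and H a hyperplane. If F ∩ H* ≠ ∅ for each * in a subset of {0, <, >} (where H^0 = H), then ∑_{* ∈ {0,<,>}, F∩H* ≠ ∅} (−1)^{dim(F ∩ H*)} = (−1)^{dim F}. -/
open scoped Classical

/-- The linear functional `v ↦ ∑ i, v i * w i`. -/
noncomputable def fw (m : ℕ) (w : Fin m → ℝ) : (Fin m → ℝ) →ₗ[ℝ] ℝ where
  toFun v := ∑ i, v i * w i
  map_add' x y := by simp [add_mul, Finset.sum_add_distrib]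
  map_smul' c x := by simp [Finset.mul_sum, mul_assoc]

lemma span_of_open {m : ℕ} (W : Submodule ℝ (Fin m → ℝ)) (U : Set (Fin m → ℝ))
    (hUW : U ⊆ (W : Set (Fin m → ℝ))) (hU : U.Nonempty)
    (hop : IsOpen {x : W | (x : Fin m → ℝ) ∈ U}) :
    Submodule.span ℝ U = W := by
  refine le_antisymm (Submodule.span_le.mpr hUW) ?_
  intro v hv
  obtain ⟨x, hx⟩ := hU
  set x' : W := ⟨x, hUW hx⟩ with hx'
  set v' : W := ⟨v, hv⟩ with hv'
  have hcont : Continuous fun t : ℝ => x' + t • v' :=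
    continuous_const.add (continuous_id.smul continuous_const)
  have h0 : (0:ℝ) ∈ (fun t : ℝ => x' + t • v') ⁻¹' {x : W | (x : Fin m → ℝ) ∈ U} := by
    simpa using hx
  obtain ⟨ε, hε, hball⟩ := Metric.mem_nhds_iff.mp ((hop.preimage hcont).mem_nhds h0)
  have hmemball : (ε/2 : ℝ) ∈ Metric.ball (0:ℝ) ε := by
    rw [Metric.mem_ball, dist_zero_right, Real.norm_eq_abs, abs_of_pos (half_pos hε)]
    linarith
  have hmem : x + (ε/2) • v ∈ U := by simpa using hball hmemball
  have h1 : x ∈ Submodule.span ℝ U := Submodule.subset_span hx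
  have h2 : x + (ε/2) • v ∈ Submodule.span ℝ U := Submodule.subset_span hmem
  have h3 : (ε/2) • v ∈ Submodule.span ℝ U := by
    have := (Submodule.span ℝ U).sub_mem h2 h1; simpa using this
  have h4 := (Submodule.span ℝ U).smul_mem (2/ε) h3
  have heq : (2/ε) • ((ε/2) • v) = v := by
    rw [smul_smul]
    have : (2/ε) * (ε/2) = 1 := by field_simp
    rw [this, one_smul]
  rwa [heq] at h4

lemma cross_lemma {m : ℕ} (f : (Fin m → ℝ) →ₗ[ℝ] ℝ) (F : Set (Fin m → ℝ))
    (hop : IsOpen {x : Submodule.span ℝ F | (x : Fin m → ℝ) ∈ F})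
    {x y : Fin m → ℝ} (hx : x ∈ F) (hy : y ∈ F) (hfx : f x = 0) :
    ∃ z ∈ F, ∃ t : ℝ, 0 < t ∧ f z = -t * f y := by
  set W := Submodule.span ℝ F
  set x' : W := ⟨x, Submodule.subset_span hx⟩
  set y' : W := ⟨y, Submodule.subset_span hy⟩
  have hcont : Continuous fun t : ℝ => x' + t • (x' - y') :=
    continuous_const.add (continuous_id.smul continuous_const)
  have h0 : (0:ℝ) ∈ (fun t : ℝ => x' + t • (x' - y')) ⁻¹' {x : W | (x : Fin m → ℝ) ∈ F} := by
    simpa using hx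
  obtain ⟨ε, hε, hball⟩ := Metric.mem_nhds_iff.mp ((hop.preimage hcont).mem_nhds h0)
  have hmemball : (ε/2 : ℝ) ∈ Metric.ball (0:ℝ) ε := by
    rw [Metric.mem_ball, dist_zero_right, Real.norm_eq_abs, abs_of_pos (half_pos hε)]
    linarith
  have hmem : x + (ε/2) • (x - y) ∈ F := by simpa using hball hmemball
  refine ⟨x + (ε/2) • (x - y), hmem, ε/2, half_pos hε, ?_⟩
  simp [map_add, map_smul, map_sub, hfx]

lemma ivt_lemma {m : ℕ} (f : (Fin m → ℝ) →ₗ[ℝ] ℝ) (F : Set (Fin m → ℝ))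
    (hconv : Convex ℝ F) {x y : Fin m → ℝ} (hx : x ∈ F) (hy : y ∈ F)
    (h1 : f x < 0) (h2 : 0 < f y) : ∃ z ∈ F, f z = 0 := by
  set a := f x
  set b := f y
  have hba : 0 < b - a := by simp only [a, b] at *; linarith
  have c1 : (0:ℝ) ≤ b / (b - a) := le_of_lt (div_pos h2 hba)
  have c2 : (0:ℝ) ≤ -a / (b - a) := le_of_lt (div_pos (by linarith) hba)
  have csum : b / (b - a) + -a / (b - a) = 1 := by field_simp; ring
  refine ⟨(b / (b - a)) • x + (-a / (b - a)) • y, hconv hx hy c1 c2 csum, ?_⟩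
  simp only [map_add, map_smul, smul_eq_mul]
  field_simp
  ring

set_option synthInstance.maxHeartbeats 1000000 in
set_option maxHeartbeats 1000000 in
lemma finrank_inf_ker {m : ℕ} (W : Submodule ℝ (Fin m → ℝ)) (f : (Fin m → ℝ) →ₗ[ℝ] ℝ)
    {y : Fin m → ℝ} (hy : y ∈ W) (hfy : f y ≠ 0) :
    Module.finrank ℝ (W ⊓ LinearMap.ker f : Submodule ℝ (Fin m → ℝ)) + 1
      = Module.finrank ℝ W := by
  set g : W →ₗ[ℝ] ℝ := f.comp W.subtype
  have hgy : g ⟨y, hy⟩ ≠ 0 := hfy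
  have hsurj : Function.Surjective g := by
    intro r
    refine ⟨(r / g ⟨y, hy⟩) • ⟨y, hy⟩, ?_⟩
    rw [map_smul, smul_eq_mul, div_mul_cancel₀ _ hgy]
  have hrange : LinearMap.range g = ⊤ := LinearMap.range_eq_top.mpr hsurj
  have h1 : Module.finrank ℝ (LinearMap.range g) = 1 := by
    rw [hrange]; simpa using Module.finrank_self ℝ
  have h2 := LinearMap.finrank_range_add_finrank_ker g
  have hker : W ⊓ LinearMap.ker f = (LinearMap.ker g).map W.subtype := by
    rw [show LinearMap.ker g = (LinearMap.ker f).comap W.subtype from rfl,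
      Submodule.map_comap_subtype]
  have h3 : Module.finrank ℝ (W ⊓ LinearMap.ker f : Submodule ℝ (Fin m → ℝ))
      = Module.finrank ℝ (LinearMap.ker g) := by
    rw [hker]
    exact (Submodule.equivMapOfInjective W.subtype W.injective_subtype
      (LinearMap.ker g)).symm.finrank_eq
  rw [h3]
  omega

/-- For a relatively open convex set `F` and a hyperplane `H`, the alternating
sum of `(−1)^{dim(F∩H^*)}` over those `* ∈ {0,<,>}` with `F∩H^* ≠ ∅` equals
`(−1)^{dim F}`. -/
theorem stmt6 (m : ℕ) (w : Fin m → ℝ) (hw : w ≠ 0) (F : Set (Fin m → ℝ))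
    (hconv : Convex ℝ F)
    (hopen : IsOpen {x : Submodule.span ℝ F | (x : Fin m → ℝ) ∈ F})
    (hne : F.Nonempty) :
    (if (F ∩ {v | ∑ i, v i * w i = 0}).Nonempty then
        (-1 : ℤ) ^ Module.finrank ℝ (Submodule.span ℝ (F ∩ {v | ∑ i, v i * w i = 0}))
      else 0) +
    (if (F ∩ {v | ∑ i, v i * w i < 0}).Nonempty then
        (-1 : ℤ) ^ Module.finrank ℝ (Submodule.span ℝ (F ∩ {v | ∑ i, v i * w i < 0}))
      else 0) +
    (if (F ∩ {v | 0 < ∑ i, v i * w i}).Nonempty then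
        (-1 : ℤ) ^ Module.finrank ℝ (Submodule.span ℝ (F ∩ {v | 0 < ∑ i, v i * w i}))
      else 0) =
    (-1 : ℤ) ^ Module.finrank ℝ (Submodule.span ℝ F) := by
  have hfdef : ∀ v, fw m w v = ∑ i, v i * w i := fun v => rfl
  set f := fw m w with hf
  set A := F ∩ {v | ∑ i, v i * w i = 0} with hA
  set B := F ∩ {v | ∑ i, v i * w i < 0} with hBdef
  set C := F ∩ {v | 0 < ∑ i, v i * w i} with hCdef
  set W := Submodule.span ℝ F with hWdef
  by_cases hB : B.Nonempty
  · by_cases hC : C.Nonempty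
    · -- F meets all three pieces
      obtain ⟨b, hbF, hbneg⟩ := hB
      obtain ⟨c, hcF, hcpos⟩ := hC
      have hbneg' : f b < 0 := hbneg
      have hcpos' : 0 < f c := hcpos
      obtain ⟨a, haF, ha0⟩ := ivt_lemma f F hconv hbF hcF hbneg' hcpos'
      have hANe : A.Nonempty := ⟨a, haF, ha0⟩
      have hBNe : B.Nonempty := ⟨b, hbF, hbneg⟩
      have hCNe : C.Nonempty := ⟨c, hcF, hcpos⟩
      have hBopen : IsOpen {x : W | (x : Fin m → ℝ) ∈ B} := by
        have heq : {x : W | (x : Fin m → ℝ) ∈ B}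
            = {x : W | (x : Fin m → ℝ) ∈ F} ∩ ((f.comp W.subtype) ⁻¹' Set.Iio 0) := rfl
        rw [heq]
        exact hopen.inter (IsOpen.preimage
          (f.comp W.subtype).continuous_of_finiteDimensional isOpen_Iio)
      have hCopen : IsOpen {x : W | (x : Fin m → ℝ) ∈ C} := by
        have heq : {x : W | (x : Fin m → ℝ) ∈ C}
            = {x : W | (x : Fin m → ℝ) ∈ F} ∩ ((f.comp W.subtype) ⁻¹' Set.Ioi 0) := rfl
        rw [heq]
        exact hopen.inter (IsOpen.preimage
          (f.comp W.subtype).continuous_of_finiteDimensional isOpen_Ioi)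
      have hBspan : Submodule.span ℝ B = W :=
        span_of_open W B (fun v hv => Submodule.subset_span hv.1) hBNe hBopen
      have hCspan : Submodule.span ℝ C = W :=
        span_of_open W C (fun v hv => Submodule.subset_span hv.1) hCNe hCopen
      set W' := W ⊓ LinearMap.ker f with hW'def
      have hAopen : IsOpen {x : W' | (x : Fin m → ℝ) ∈ A} := by
        have hcont : Continuous (Submodule.inclusion (inf_le_left : W' ≤ W)) :=
          (Submodule.inclusion (inf_le_left : W' ≤ W)).continuous_of_finiteDimensional
        have heq : {x : W' | (x : Fin m → ℝ) ∈ A}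
            = (Submodule.inclusion (inf_le_left : W' ≤ W)) ⁻¹' {x : W | (x : Fin m → ℝ) ∈ F} := by
          ext x
          constructor
          · exact fun h => h.1
          · intro h
            exact ⟨h, (Submodule.mem_inf.mp x.2).2⟩
        rw [heq]
        exact hopen.preimage hcont
      have hAspan : Submodule.span ℝ A = W' :=
        span_of_open W' A
          (fun v hv => Submodule.mem_inf.mpr ⟨Submodule.subset_span hv.1, hv.2⟩) hANe hAopen
      have hrank := finrank_inf_ker W f (Submodule.subset_span hcF) (ne_of_gt hcpos')
      have hrank' : Module.finrank ℝ W' + 1 = Module.finrank ℝ W := hrank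
      rw [if_pos hANe, if_pos hBNe, if_pos hCNe, hAspan, hBspan, hCspan, ← hrank', pow_succ]
      ring
    · -- C empty, so A empty and B = F
      have hANe : ¬ A.Nonempty := by
        rintro ⟨a, haF, ha0⟩
        obtain ⟨b, hbF, hbneg⟩ := hB
        obtain ⟨z, hzF, t, ht, hz⟩ := cross_lemma f F hopen haF hbF ha0
        have hbneg' : f b < 0 := hbneg
        refine hC ⟨z, hzF, ?_⟩
        show 0 < ∑ i, z i * w i
        rw [← hfdef, hz]
        nlinarith
      have hBF : B = F := by
        ext v
        constructor
        · exact fun h => h.1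
        · intro hv
          refine ⟨hv, ?_⟩
          rcases lt_trichotomy (∑ i, v i * w i) 0 with h | h | h
          · exact h
          · exact absurd ⟨v, hv, h⟩ hANe
          · exact absurd ⟨v, hv, h⟩ hC
      rw [if_neg hANe, if_pos hB, if_neg hC, hBF]
      ring
  · by_cases hC : C.Nonempty
    · -- B empty, so A empty and C = F
      have hANe : ¬ A.Nonempty := by
        rintro ⟨a, haF, ha0⟩
        obtain ⟨c, hcF, hcpos⟩ := hC
        obtain ⟨z, hzF, t, ht, hz⟩ := cross_lemma f F hopen haF hcF ha0
        have hcpos' : 0 < f c := hcpos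
        refine hB ⟨z, hzF, ?_⟩
        show ∑ i, z i * w i < 0
        rw [← hfdef, hz]
        nlinarith
      have hCF : C = F := by
        ext v
        constructor
        · exact fun h => h.1
        · intro hv
          refine ⟨hv, ?_⟩
          rcases lt_trichotomy (∑ i, v i * w i) 0 with h | h | h
          · exact absurd ⟨v, hv, h⟩ hB
          · exact absurd ⟨v, hv, h⟩ hANe
          · exact h
      rw [if_neg hANe, if_neg hB, if_pos hC, hCF]
      ring
    · -- B, C empty, so A = F
      have hAF : A = F := by
        ext v
        constructor
        · exact fun h => h.1
        · intro hv
          refine ⟨hv, ?_⟩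
          rcases lt_trichotomy (∑ i, v i * w i) 0 with h | h | h
          · exact absurd ⟨v, hv, h⟩ hB
          · exact h
          · exact absurd ⟨v, hv, h⟩ hC
      rw [hAF, if_pos hne, if_neg hB, if_neg hC]
      ring
end

section
/- Let C ⊆ ℝ^m be a simplicial cone of dimension m defined by m bounding hyperplanes B_1,…,B_m (so C = ∩ B_i^≥ and every point of C is a unique nonnegative combination of m fixed linearly independent vectors). For I ⊆ [m] let C_I = ∩_{i∈I} B_i^> ∩ ∩_{j∉I} B_j^≥. In the cell complex with no internal hyperplanes, the cells are the sets C_J for J ⊆ [m], the face relation is F_1 ≤ F_2 iff closure(F_1) ⊆ closure(F_2), and for any cell F_0 and any I ⊆ [m]: ∑_{F a cell with F ⊆ C_I and F ≥ F_0} (−1)^{dim F} equals (−1)^m if F_0 ⊆ C_{[m]∖I} and 0 otherwise. -/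
open scoped Classical

/-- The cell of the complex (no internal hyperplanes) with strict positivity on the
bounding forms `B i`, `i ∈ J`, and lying on the bounding hyperplanes `B i`, `i ∉ J`. -/
def cellOf (m : ℕ) (B : Fin m → (Fin m → ℝ)) (J : Finset (Fin m)) : Set (Fin m → ℝ) :=
  {x | (∀ i ∈ J, 0 < ∑ j, B i j * x j) ∧ ∀ i ∉ J, ∑ j, B i j * x j = 0}

/-- `C_I = ∩_{i∈I} B_i^> ∩ ∩_{j∉I} B_j^≥`. -/
def CIOf (m : ℕ) (B : Fin m → (Fin m → ℝ)) (I : Finset (Fin m)) : Set (Fin m → ℝ) :=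
  {x | (∀ i ∈ I, 0 < ∑ j, B i j * x j) ∧ ∀ i, 0 ≤ ∑ j, B i j * x j}

lemma monomial_of_orthant (m : ℕ) (M : Matrix (Fin m) (Fin m) ℝ)
    (hKey : ∀ c : Fin m → ℝ, (∀ i, 0 ≤ ∑ j, M i j * c j) ↔ ∀ j, 0 ≤ c j) :
    ∃ (σ : Equiv.Perm (Fin m)), (∀ i, 0 < M i (σ i)) ∧ ∀ i j, j ≠ σ i → M i j = 0 := by
  classical
  have hKey' : ∀ c : Fin m → ℝ, (∀ i, 0 ≤ M.mulVec c i) ↔ ∀ j, 0 ≤ c j := by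
    intro c
    simpa [Matrix.mulVec, dotProduct] using hKey c
  have hMnn : ∀ i j, 0 ≤ M i j := by
    intro i j
    have := (hKey' (fun k => if k = j then 1 else 0)).2 (by intro k; positivity) i
    simpa [Matrix.mulVec, dotProduct, mul_ite] using this
  have hinj : Function.Injective M.mulVec := by
    have h0 : ∀ c, M.mulVec c = 0 → c = 0 := by
      intro c hc
      have h1 : ∀ j, 0 ≤ c j := (hKey' c).1 (by simp [hc])
      have h2 : ∀ j, 0 ≤ -c j := by
        have := (hKey' (-c)).1 (by simp [Matrix.mulVec_neg, hc])
        simpa using this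
      funext j
      exact le_antisymm (by simpa using h2 j) (h1 j)
    intro a b hab
    have : M.mulVec (a - b) = 0 := by
      simp [Matrix.mulVec_sub, hab]
    have := h0 _ this
    exact sub_eq_zero.1 (by funext j; exact congrFun this j)
  have hunit : IsUnit M := Matrix.mulVec_injective_iff_isUnit.1 hinj
  have hdet : IsUnit M.det := (Matrix.isUnit_iff_isUnit_det M).1 hunit
  set N := M⁻¹ with hN
  have hMN : M * N = 1 := Matrix.mul_nonsing_inv M hdet
  have hNM : N * M = 1 := Matrix.nonsing_inv_mul M hdet
  have hNnn : ∀ j i, 0 ≤ N j i := by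
    intro j i
    have : ∀ k, 0 ≤ N k i := by
      refine (hKey' (fun k => N k i)).1 ?_
      intro l
      have : M.mulVec (fun k => N k i) l = (M * N) l i := by
        simp [Matrix.mulVec, dotProduct, Matrix.mul_apply]
      rw [this, hMN]
      by_cases h : l = i <;> simp [Matrix.one_apply, h]
    exact this j
  -- each row has a positive entry
  have hrow : ∀ i, ∃ j, 0 < M i j := by
    intro i
    by_contra h
    push_neg at h
    have hz : ∀ j, M i j = 0 := fun j => le_antisymm (h j) (hMnn i j)
    have : (M * N) i i = 0 := by
      simp [Matrix.mul_apply, hz]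
    rw [hMN] at this
    simp [Matrix.one_apply] at this
  have claim1 : ∀ i j, 0 < M i j → ∀ k, k ≠ i → N j k = 0 := by
    intro i j hij k hk
    have h0 : (M * N) i k = 0 := by rw [hMN]; simp [Matrix.one_apply, (Ne.symm hk)]
    rw [Matrix.mul_apply] at h0
    have := (Finset.sum_eq_zero_iff_of_nonneg (fun l _ => mul_nonneg (hMnn i l) (hNnn l k))).1 h0 j (Finset.mem_univ j)
    rcases mul_eq_zero.1 this with h | h
    · exact absurd h (ne_of_gt hij)
    · exact h
  have claim2 : ∀ i j, 0 < M i j → 0 < N j i := by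
    intro i j hij
    rcases lt_or_eq_of_le (hNnn j i) with h | h
    · exact h
    · exfalso
      have hz : ∀ k, N j k = 0 := by
        intro k
        by_cases hk : k = i
        · rw [hk]; exact h.symm
        · exact claim1 i j hij k hk
      have : (N * M) j j = 0 := by simp [Matrix.mul_apply, hz]
      rw [hNM] at this
      simp [Matrix.one_apply] at this
  have claim3 : ∀ i j, 0 < M i j → ∀ j', j' ≠ j → M i j' = 0 := by
    intro i j hij j' hj'
    have h0 : (N * M) j j' = 0 := by rw [hNM]; simp [Matrix.one_apply, Ne.symm hj']
    rw [Matrix.mul_apply] at h0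
    have := (Finset.sum_eq_zero_iff_of_nonneg (fun l _ => mul_nonneg (hNnn j l) (hMnn l j'))).1 h0 i (Finset.mem_univ i)
    rcases mul_eq_zero.1 this with h | h
    · exact absurd h (ne_of_gt (claim2 i j hij))
    · exact h
  choose σ0 hσ0 using hrow
  have hσinj : Function.Injective σ0 := by
    intro i i' h
    by_contra hne
    have hz : ∀ k, N (σ0 i) k = 0 := by
      intro k
      by_cases hk : k = i
      · subst hk
        have := claim1 i' (σ0 i') (hσ0 i') k hne
        rwa [← h] at this
      · exact claim1 i (σ0 i) (hσ0 i) k hk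
    have : (N * M) (σ0 i) (σ0 i) = 0 := by simp [Matrix.mul_apply, hz]
    rw [hNM] at this
    simp [Matrix.one_apply] at this
  refine ⟨Equiv.ofBijective σ0 (Finite.injective_iff_bijective.1 hσinj), ?_, ?_⟩
  · intro i; simpa using hσ0 i
  · intro i j hj
    exact claim3 i (σ0 i) (hσ0 i) j (by simpa using hj)

lemma aux_sum (m : ℕ) (K : Finset (Fin m)) :
    (∑ J ∈ (Finset.univ : Finset (Fin m)).powerset, if K ⊆ J then (-1:ℤ)^J.card else 0)
      = if K = Finset.univ then (-1:ℤ)^m else 0 := by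
  classical
  rw [← Finset.sum_filter]
  have h1 : ∑ J ∈ (Finset.univ : Finset (Fin m)).powerset.filter (fun J => K ⊆ J),
      (-1:ℤ)^J.card = ∑ S ∈ Kᶜ.powerset, (-1:ℤ)^(K.card + S.card) := by
    refine Finset.sum_nbij' (fun J => J \ K) (fun S => K ∪ S) ?_ ?_ ?_ ?_ ?_
    · intro J hJ
      simp only [Finset.mem_filter, Finset.mem_powerset] at hJ
      simp only [Finset.mem_powerset]
      intro x hx
      simp only [Finset.mem_sdiff] at hx
      simpa [Finset.mem_compl] using hx.2
    · intro S hS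
      simp [Finset.mem_powerset]
    · intro J hJ
      simp only [Finset.mem_filter, Finset.mem_powerset] at hJ
      exact Finset.union_sdiff_of_subset hJ.2
    · intro S hS
      simp only [Finset.mem_powerset] at hS
      show (K ∪ S) \ K = S
      rw [Finset.union_sdiff_cancel_left]
      rw [Finset.disjoint_left]
      intro a ha haS
      exact (Finset.mem_compl.1 (hS haS)) ha
    · intro J hJ
      simp only [Finset.mem_filter, Finset.mem_powerset] at hJ
      congr 1
      rw [← Finset.card_union_of_disjoint (Finset.disjoint_sdiff), Finset.union_sdiff_of_subset hJ.2]
  rw [h1]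
  simp_rw [pow_add]
  rw [← Finset.mul_sum, Finset.sum_powerset_neg_one_pow_card]
  by_cases h : K = Finset.univ
  · subst h
    simp [Finset.card_univ]
  · rw [if_neg h, if_neg (fun he => h ((Finset.compl_eq_empty_iff K).1 he)), mul_zero]

lemma key_lemma (m : ℕ) (B : Fin m → (Fin m → ℝ)) (bas : Module.Basis (Fin m) ℝ (Fin m → ℝ))
    (σ : Equiv.Perm (Fin m)) (d : Fin m → ℝ) (hd : ∀ i, 0 < d i)
    (hform : ∀ i x, ∑ j, B i j * x j = d i * bas.repr x (σ i))
    (I J₀ : Finset (Fin m)) (hJ₀ : (cellOf m B J₀).Nonempty) :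
    (∑ J ∈ (Finset.univ : Finset (Fin m)).powerset,
        if (cellOf m B J).Nonempty ∧ cellOf m B J ⊆ CIOf m B I ∧
            closure (cellOf m B J₀) ⊆ closure (cellOf m B J) then
          (-1 : ℤ) ^ Module.finrank ℝ (Submodule.span ℝ (cellOf m B J))
        else 0) =
      if cellOf m B J₀ ⊆ CIOf m B (Finset.univ \ I) then (-1 : ℤ) ^ m else 0 := by
  classical
  have hcell : ∀ (J : Finset (Fin m)) x, x ∈ cellOf m B J ↔
      ((∀ i ∈ J, 0 < bas.repr x (σ i)) ∧ ∀ i ∉ J, bas.repr x (σ i) = 0) := by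
    intro J x
    constructor
    · rintro ⟨h1, h2⟩
      refine ⟨fun i hi => ?_, fun i hi => ?_⟩
      · have := h1 i hi; rw [hform] at this; nlinarith [hd i]
      · have := h2 i hi; rw [hform] at this
        rcases mul_eq_zero.1 this with h | h
        · exact absurd h (ne_of_gt (hd i))
        · exact h
    · rintro ⟨h1, h2⟩
      refine ⟨fun i hi => ?_, fun i hi => ?_⟩
      · rw [hform]; exact mul_pos (hd i) (h1 i hi)
      · rw [hform, h2 i hi, mul_zero]
  set xS : Finset (Fin m) → (Fin m → ℝ) := fun S => ∑ i ∈ S, bas (σ i) with hxSdef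
  have hxS : ∀ (S : Finset (Fin m)) k, bas.repr (xS S) (σ k) = if k ∈ S then 1 else 0 := by
    intro S k
    rw [hxSdef]
    simp only [map_sum]
    rw [Finset.sum_apply']
    simp only [Module.Basis.repr_self, Finsupp.single_apply, EmbeddingLike.apply_eq_iff_eq]
    rw [Finset.sum_ite_eq' S k (fun _ => (1:ℝ))]
  have hmem : ∀ J, xS J ∈ cellOf m B J := by
    intro J
    rw [hcell]
    refine ⟨fun i hi => ?_, fun i hi => ?_⟩
    · rw [hxS]; simp [hi]
    · rw [hxS]; simp [hi]
  have hne : ∀ J, (cellOf m B J).Nonempty := fun J => ⟨xS J, hmem J⟩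
  have cont : ∀ k, Continuous fun x : Fin m → ℝ => bas.repr x k := by
    intro k
    have := (bas.coord k).continuous_of_finiteDimensional
    have h : (fun x : Fin m → ℝ => bas.repr x k) = ⇑(bas.coord k) := funext fun x => by rw [Module.Basis.coord_apply]
    rw [h]; exact this
  have hclosed : ∀ J, closure (cellOf m B J) ⊆ {x | ∀ i ∉ J, bas.repr x (σ i) = 0} := by
    intro J
    refine closure_minimal (fun x hx => ((hcell J x).1 hx).2) ?_
    have he : {x : Fin m → ℝ | ∀ i ∉ J, bas.repr x (σ i) = 0}
        = ⋂ i ∈ {i : Fin m | i ∉ J}, {x | bas.repr x (σ i) = 0} := by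
      ext x; simp
    rw [he]
    exact isClosed_biInter fun i _ => isClosed_eq (cont (σ i)) continuous_const
  have hsub : ∀ K J : Finset (Fin m), (cellOf m B J ⊆ CIOf m B K ↔ K ⊆ J) := by
    intro K J
    constructor
    · intro h i hiK
      have hx := h (hmem J)
      by_contra hiJ
      have h0 : bas.repr (xS J) (σ i) = 0 := by rw [hxS]; simp [hiJ]
      have := hx.1 i hiK
      rw [hform, h0, mul_zero] at this
      exact lt_irrefl 0 this
    · intro hKJ x hx
      obtain ⟨h1, h2⟩ := (hcell J x).1 hx
      constructor
      · intro i hi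
        rw [hform]; exact mul_pos (hd i) (h1 i (hKJ hi))
      · intro i
        rw [hform]
        by_cases hiJ : i ∈ J
        · exact le_of_lt (mul_pos (hd i) (h1 i hiJ))
        · rw [h2 i hiJ, mul_zero]
  have hclos : ∀ J, (closure (cellOf m B J₀) ⊆ closure (cellOf m B J)) ↔ J₀ ⊆ J := by
    intro J
    constructor
    · intro h i hi
      obtain ⟨x₀, hx₀⟩ := hJ₀
      have hx₀' : x₀ ∈ {x | ∀ i ∉ J, bas.repr x (σ i) = 0} :=
        hclosed J (h (subset_closure hx₀))
      by_contra hiJ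
      have h0 := hx₀' i hiJ
      have hpos := ((hcell J₀ x₀).1 hx₀).1 i hi
      rw [h0] at hpos; exact lt_irrefl 0 hpos
    · intro hJJ
      refine closure_minimal ?_ isClosed_closure
      intro x hx
      obtain ⟨h1, h2⟩ := (hcell J₀ x).1 hx
      set w := xS (J \ J₀) with hw
      have hmemε : ∀ ε : ℝ, 0 < ε → x + ε • w ∈ cellOf m B J := by
        intro ε hε
        rw [hcell]
        have hrepr : ∀ k, bas.repr (x + ε • w) (σ k)
            = bas.repr x (σ k) + ε * (if k ∈ J \ J₀ then 1 else 0) := by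
          intro k
          rw [map_add, map_smul]
          rw [Finsupp.add_apply, Finsupp.smul_apply, hw, hxS]
          simp
        constructor
        · intro i hi
          rw [hrepr]
          by_cases hij : i ∈ J₀
          · have := h1 i hij
            by_cases h3 : i ∈ J \ J₀ <;> simp only [h3, if_true, if_false] <;> nlinarith
          · have hi' : i ∈ J \ J₀ := Finset.mem_sdiff.2 ⟨hi, hij⟩
            rw [h2 i hij]
            simp [hi', hε]
        · intro i hi
          have hi0 : i ∉ J₀ := fun h' => hi (hJJ h')
          rw [hrepr, h2 i hi0]
          simp [Finset.mem_sdiff, hi]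
      have htend : Filter.Tendsto (fun ε : ℝ => x + ε • w) (nhdsWithin 0 (Set.Ioi 0)) (nhds x) := by
        have hc : Filter.Tendsto (fun ε : ℝ => x + ε • w) (nhds 0) (nhds (x + (0:ℝ) • w)) :=
          ((continuous_const.add (continuous_id.smul continuous_const)).tendsto 0)
        simpa using hc.mono_left nhdsWithin_le_nhds
      exact mem_closure_of_tendsto htend
        (by filter_upwards [self_mem_nhdsWithin] with ε hε using hmemε ε hε)
  have hspanJ : ∀ J : Finset (Fin m), Submodule.span ℝ (cellOf m B J)
      = Submodule.span ℝ (Set.range (fun i : J => bas (σ i))) := by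
    intro J
    apply le_antisymm
    · rw [Submodule.span_le]
      intro x hx
      obtain ⟨h1, h2⟩ := (hcell J x).1 hx
      have hxsum : x = ∑ i ∈ J, bas.repr x (σ i) • bas (σ i) := by
        have h4 : x = ∑ k, bas.repr x k • bas k := (bas.sum_repr x).symm
        have h5 : ∑ k, bas.repr x k • bas k = ∑ i : Fin m, bas.repr x (σ i) • bas (σ i) :=
          (Equiv.sum_comp σ (fun k => bas.repr x k • bas k)).symm
        have h6 : ∑ i ∈ J, bas.repr x (σ i) • bas (σ i)
            = ∑ i : Fin m, bas.repr x (σ i) • bas (σ i) := by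
          apply Finset.sum_subset (Finset.subset_univ J)
          intro i _ hiJ
          rw [h2 i hiJ, zero_smul]
        rw [h6, ← h5]
        exact h4
      rw [hxsum]
      exact Submodule.sum_mem _ fun i hi => Submodule.smul_mem _ _
        (Submodule.subset_span ⟨⟨i, hi⟩, rfl⟩)
    · rw [Submodule.span_le]
      rintro _ ⟨⟨i, hi⟩, rfl⟩
      show bas (σ i) ∈ Submodule.span ℝ (cellOf m B J)
      have hmem2 : xS J + bas (σ i) ∈ cellOf m B J := by
        rw [hcell]
        have hrepr : ∀ k, bas.repr (xS J + bas (σ i)) (σ k)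
            = (if k ∈ J then 1 else 0) + (if k = i then 1 else 0) := by
          intro k
          rw [map_add, Finsupp.add_apply, hxS]
          congr 1
          simp [Module.Basis.repr_self, Finsupp.single_apply, EmbeddingLike.apply_eq_iff_eq, eq_comm]
        constructor
        · intro k hk
          rw [hrepr]
          by_cases h3 : k = i <;> simp [hk, h3, hi] <;> norm_num
        · intro k hk
          have hki : k ≠ i := fun h => hk (h ▸ hi)
          rw [hrepr]
          simp [hk, hki]
      have hsplit : bas (σ i) = (xS J + bas (σ i)) - xS J := by abel
      rw [hsplit]
      exact sub_mem (Submodule.subset_span hmem2) (Submodule.subset_span (hmem J))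
  have hdim : ∀ J : Finset (Fin m),
      Module.finrank ℝ (Submodule.span ℝ (cellOf m B J)) = J.card := by
    intro J
    rw [hspanJ]
    have hli : LinearIndependent ℝ (fun i : J => bas (σ i)) := by
      have hinj : Function.Injective (fun i : J => σ (i : Fin m)) :=
        fun a b h => Subtype.ext (σ.injective h)
      exact bas.linearIndependent.comp _ hinj
    rw [finrank_span_eq_card hli, Fintype.card_coe]
  have hcond : ∀ J ∈ (Finset.univ : Finset (Fin m)).powerset,
      (if (cellOf m B J).Nonempty ∧ cellOf m B J ⊆ CIOf m B I ∧
            closure (cellOf m B J₀) ⊆ closure (cellOf m B J) then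
          (-1 : ℤ) ^ Module.finrank ℝ (Submodule.span ℝ (cellOf m B J)) else 0)
        = if I ∪ J₀ ⊆ J then (-1:ℤ)^J.card else 0 := by
    intro J _
    have hiff : ((cellOf m B J).Nonempty ∧ cellOf m B J ⊆ CIOf m B I ∧
            closure (cellOf m B J₀) ⊆ closure (cellOf m B J)) ↔ (I ∪ J₀ ⊆ J) := by
      rw [hsub I J, hclos J, Finset.union_subset_iff]
      simp [hne J]
    rw [hdim J, if_congr hiff rfl rfl]
  rw [Finset.sum_congr rfl hcond, aux_sum]
  have hrhs : (cellOf m B J₀ ⊆ CIOf m B (Finset.univ \ I)) ↔ (I ∪ J₀ = Finset.univ) := by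
    rw [hsub (Finset.univ \ I) J₀]
    constructor
    · intro h
      rw [Finset.eq_univ_iff_forall]
      intro x
      by_cases hx : x ∈ I
      · exact Finset.mem_union_left _ hx
      · exact Finset.mem_union_right _ (h (Finset.mem_sdiff.2 ⟨Finset.mem_univ x, hx⟩))
    · intro h x hx
      rw [Finset.mem_sdiff] at hx
      have hxm : x ∈ I ∪ J₀ := h ▸ Finset.mem_univ x
      rcases Finset.mem_union.1 hxm with h' | h'
      · exact absurd h' hx.2
      · exact h'
  rw [if_congr hrhs rfl rfl]

/-- For a simplicial cone `C` of dimension `m` cut out by `m` bounding hyperplanes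
(so every point of `C` is a unique nonnegative combination of `m` independent
generators `v`), and any cell `F₀` and `I ⊆ [m]`:
`∑_{F ⊆ C_I, F ≥ F₀} (−1)^{dim F}` is `(−1)^m` if `F₀ ⊆ C_{[m]∖I}` and `0` otherwise. -/
theorem stmt8 (m : ℕ) (B v : Fin m → (Fin m → ℝ))
    (hv : LinearIndependent ℝ v)
    (hC : {x : Fin m → ℝ | ∀ i, 0 ≤ ∑ j, B i j * x j} =
        {x | ∃ c : Fin m → ℝ, (∀ i, 0 ≤ c i) ∧ x = ∑ i, c i • v i})
    (huniq : ∀ x ∈ {x : Fin m → ℝ | ∀ i, 0 ≤ ∑ j, B i j * x j},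
        ∃! c : Fin m → ℝ, (∀ i, 0 ≤ c i) ∧ x = ∑ i, c i • v i)
    (I J₀ : Finset (Fin m)) (hJ₀ : (cellOf m B J₀).Nonempty) :
    (∑ J ∈ (Finset.univ : Finset (Fin m)).powerset,
        if (cellOf m B J).Nonempty ∧ cellOf m B J ⊆ CIOf m B I ∧
            closure (cellOf m B J₀) ⊆ closure (cellOf m B J) then
          (-1 : ℤ) ^ Module.finrank ℝ (Submodule.span ℝ (cellOf m B J))
        else 0) =
      if cellOf m B J₀ ⊆ CIOf m B (Finset.univ \ I) then (-1 : ℤ) ^ m else 0 := by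
  classical
  have hcard : Fintype.card (Fin m) = Module.finrank ℝ (Fin m → ℝ) := by simp
  have hspan : Submodule.span ℝ (Set.range v) = ⊤ :=
    hv.span_eq_top_of_card_eq_finrank' hcard
  set bas : Module.Basis (Fin m) ℝ (Fin m → ℝ) := Module.Basis.mk hv hspan.ge with hbasdef
  have hbas : ∀ i, bas i = v i := fun i => Module.Basis.mk_apply hv hspan.ge i
  set M : Matrix (Fin m) (Fin m) ℝ := fun i j => ∑ k, B i k * v j k with hMdef
  have hBx : ∀ i x, ∑ j, B i j * x j = ∑ j, M i j * bas.repr x j := by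
    intro i x
    conv_lhs => rw [← bas.sum_repr x]
    simp only [Finset.sum_apply, Pi.smul_apply, smul_eq_mul, Finset.mul_sum]
    rw [Finset.sum_comm]
    refine Finset.sum_congr rfl fun j _ => ?_
    rw [hMdef]
    simp [hbas, Finset.sum_mul, Finset.mul_sum]
    refine Finset.sum_congr rfl fun k _ => by ring
  have hreprsum : ∀ c : Fin m → ℝ, ⇑(bas.repr (∑ i, c i • v i)) = c := by
    intro c
    have h : (∑ i, c i • v i) = ∑ i, c i • bas i := by
      refine Finset.sum_congr rfl fun i _ => by rw [hbas]
    rw [h, bas.repr_sum_self]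
  have hKey : ∀ c : Fin m → ℝ, (∀ i, 0 ≤ ∑ j, M i j * c j) ↔ ∀ j, 0 ≤ c j := by
    intro c
    constructor
    · intro h
      have hx : (∑ i, c i • v i) ∈ {x : Fin m → ℝ | ∀ i, 0 ≤ ∑ j, B i j * x j} := by
        intro i
        rw [hBx, hreprsum]
        exact h i
      rw [hC] at hx
      obtain ⟨c', hc', hxc'⟩ := hx
      have hcc : c' = c := by
        have h1 := hreprsum c'
        rw [← hxc'] at h1
        exact h1.symm.trans (hreprsum c)
      exact hcc ▸ hc'
    · intro h i
      have hx : (∑ i, c i • v i) ∈ {x | ∃ c : Fin m → ℝ, (∀ i, 0 ≤ c i) ∧ x = ∑ i, c i • v i} :=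
        ⟨c, h, rfl⟩
      rw [← hC] at hx
      have := hx i
      rwa [hBx, hreprsum] at this
  obtain ⟨σ, hdpos, hz⟩ := monomial_of_orthant m M hKey
  have hform : ∀ i x, ∑ j, B i j * x j = M i (σ i) * bas.repr x (σ i) := by
    intro i x
    rw [hBx]
    rw [Finset.sum_eq_single (σ i)]
    · intro b _ hb
      rw [hz i b hb, zero_mul]
    · intro h; exact absurd (Finset.mem_univ _) h
  exact key_lemma m B bas σ (fun i => M i (σ i)) hdpos hform I J₀ hJ₀
end

section
/- Let u_1,…,u_k ∈ ℤ^m be ℝ-linearly independent, let A, C ∈ ℤ^m, B ∈ ℤ^m with B·u_i > 0 for all i, and let F_0 = {∑ λ_i u_i : λ_i > 0}. Define E(q, q^{−s}) = ∑_{e ∈ F_0 ∩ ℤ^m} q^{(A+C)·e − (B·e)s}. Then E is a rational function in q and q^{−s}, equal to (∑_{e ∈ D_1} q^{(A+C)·e − (B·e)s}) · ∏_{i=1}^k (1 − q^{(A+C)·u_i − (B·u_i)s})^{−1}, where D_1 = ℤ^m ∩ ∑(0,1]u_i. Moreover, substituting q → q^{−1} yields (−1)^k · ∑_{e ∈ closure(F_0)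 ∩ ℤ^m} q^{(A+C)·e − (B·e)s}. -/
lemma geo_pi_norm : ∀ (k : ℕ) (r : Fin k → ℂ), (∀ i, ‖r i‖ < 1) →
    Summable (fun n : Fin k → ℕ => ‖∏ i, r i ^ n i‖) := by
  intro k
  induction k with
  | zero => intro r hr; exact Summable.of_finite
  | succ k ih =>
    intro r hr
    have h0 : Summable (fun n : ℕ => ‖r 0 ^ n‖) := by
      simpa [norm_pow] using summable_geometric_of_lt_one (norm_nonneg (r 0)) (hr 0)
    have h1 := ih (fun i => r i.succ) (fun i => hr i.succ)
    have hmul := h0.mul_norm h1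
    apply (Fin.consEquiv fun _ : Fin (k+1) => ℕ).summable_iff.mp
    convert hmul using 1
    ext p
    obtain ⟨a, n⟩ := p
    simp [Fin.consEquiv, Fin.prod_univ_succ, norm_mul, norm_prod, norm_pow]

lemma geo_pi_tsum : ∀ (k : ℕ) (r : Fin k → ℂ), (∀ i, ‖r i‖ < 1) →
    (∑' n : Fin k → ℕ, ∏ i, r i ^ n i) = ∏ i, (1 - r i)⁻¹ := by
  intro k
  induction k with
  | zero =>
    intro r hr
    rw [tsum_eq_single (default : Fin 0 → ℕ) (fun b hb => absurd (Subsingleton.elim b default) hb)]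
    simp
  | succ k ih =>
    intro r hr
    have h0 : Summable (fun n : ℕ => ‖r 0 ^ n‖) := by
      simpa [norm_pow] using summable_geometric_of_lt_one (norm_nonneg (r 0)) (hr 0)
    have h1 := geo_pi_norm k (fun i => r i.succ) (fun i => hr i.succ)
    have key := tsum_mul_tsum_of_summable_norm h0 h1
    rw [← (Fin.consEquiv fun _ : Fin (k+1) => ℕ).tsum_eq]
    have : ∀ p : ℕ × (Fin k → ℕ),
        (∏ i, r i ^ (Fin.consEquiv fun _ : Fin (k+1) => ℕ) p i) =
          r 0 ^ p.1 * ∏ i, (r i.succ) ^ p.2 i := by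
      intro ⟨a, n⟩
      simp [Fin.consEquiv, Fin.prod_univ_succ]
    rw [tsum_congr this]
    rw [← key, ih (fun i => r i.succ) (fun i => hr i.succ),
      tsum_geometric_of_norm_lt_one (hr 0), Fin.prod_univ_succ]


lemma factor_tsum {m k : ℕ} {P D : (Fin m → ℤ) → Prop}
    (g : (Fin m → ℤ) → ℂ) (r : Fin k → ℂ) (hr : ∀ i, ‖r i‖ < 1)
    (e : {d : Fin m → ℤ // D d} × (Fin k → ℕ) ≃ {x : Fin m → ℤ // P x})
    (hDfin : Set.Finite (setOf D))
    (hg : ∀ (d : {d : Fin m → ℤ // D d}) (n : Fin k → ℕ),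
      g ((e (d, n)) : Fin m → ℤ) = g d.1 * ∏ i, r i ^ n i) :
    (∑' x : {x : Fin m → ℤ // P x}, g x.1) =
      (∑' d : {d : Fin m → ℤ // D d}, g d.1) * ∏ i, (1 - r i)⁻¹ := by
  haveI : Finite {d : Fin m → ℤ // D d} := hDfin.to_subtype
  rw [← e.tsum_eq]
  have h1 : Summable (fun d : {d : Fin m → ℤ // D d} => ‖g d.1‖) := Summable.of_finite
  have key := tsum_mul_tsum_of_summable_norm h1 (geo_pi_norm k r hr)
  calc (∑' p : {d : Fin m → ℤ // D d} × (Fin k → ℕ), g ((e p) : Fin m → ℤ))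
      = ∑' p : {d : Fin m → ℤ // D d} × (Fin k → ℕ), g p.1.1 * ∏ i, r i ^ p.2 i :=
        tsum_congr fun p => hg p.1 p.2
    _ = (∑' d : {d : Fin m → ℤ // D d}, g d.1) * ∑' n : Fin k → ℕ, ∏ i, r i ^ n i := key.symm
    _ = _ := by rw [geo_pi_tsum k r hr]

namespace Stmt10Aux

variable {m k : ℕ} (u : Fin k → (Fin m → ℤ))

lemma cast_sum_eq {x : Fin m → ℤ} {c : Fin k → ℝ} :
    ((fun j => (x j : ℝ)) = ∑ i, c i • fun j => ((u i j : ℝ))) ↔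
      ∀ j, (x j : ℝ) = ∑ i, c i * (u i j : ℝ) := by
  constructor
  · intro h j; have := congrFun h j; simpa [Finset.sum_apply, smul_eq_mul] using this
  · intro h; funext j; simpa [Finset.sum_apply, smul_eq_mul] using h j

lemma coeff_unique (hu : LinearIndependent ℝ fun i => fun j => ((u i j : ℝ)))
    {a b : Fin k → ℝ}
    (h : ∀ j, (∑ i, a i * (u i j : ℝ)) = ∑ i, b i * (u i j : ℝ)) : a = b := by
  have key : ∑ i, (a i - b i) • (fun j => ((u i j : ℝ))) = 0 := by
    funext j
    simp only [Finset.sum_apply, Pi.smul_apply, smul_eq_mul, Pi.zero_apply, sub_mul]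
    rw [Finset.sum_sub_distrib, h j, sub_self]
  have := Fintype.linearIndependent_iff.mp hu (a - b) (by simpa using key)
  funext i
  have := this i
  simpa [sub_eq_zero] using this

/-- value of lattice points: pointwise formula for `d + ∑ n i • u i`. -/
lemma add_nsmul_apply (d : Fin m → ℤ) (n : Fin k → ℕ) (j : Fin m) :
    ((d + ∑ i, n i • u i) j : ℝ) = (d j : ℝ) + ∑ i, (n i : ℝ) * (u i j : ℝ) := by
  simp only [Pi.add_apply, Finset.sum_apply, Pi.smul_apply, nsmul_eq_mul, Pi.mul_apply, Pi.natCast_apply]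
  push_cast
  ring

end Stmt10Aux

namespace Stmt10Aux

variable {m k : ℕ} (u : Fin k → (Fin m → ℤ))

/-- The map from (box point, nat vector) to cone lattice point. -/
def psi (pred : ℝ → Prop) (I : Set ℝ)
    (hfor : ∀ (μ : ℝ), μ ∈ I → ∀ n : ℕ, pred (μ + n)) :
    {d : Fin m → ℤ // ∃ μ : Fin k → ℝ, (∀ i, μ i ∈ I) ∧
        (fun j => (d j : ℝ)) = ∑ i, μ i • fun j => ((u i j : ℝ))} × (Fin k → ℕ) →
      {x : Fin m → ℤ // ∃ lam : Fin k → ℝ, (∀ i, pred (lam i)) ∧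
        (fun j => (x j : ℝ)) = ∑ i, lam i • fun j => ((u i j : ℝ))} :=
  fun p => ⟨p.1.1 + ∑ i, p.2 i • u i, by
    obtain ⟨μ, hμI, hμ⟩ := p.1.2
    refine ⟨fun i => μ i + p.2 i, fun i => hfor _ (hμI i) _, ?_⟩
    rw [cast_sum_eq] at hμ ⊢
    intro j
    rw [add_nsmul_apply, hμ j, ← Finset.sum_add_distrib]
    exact Finset.sum_congr rfl fun i _ => by ring⟩

lemma psi_bijective (hu : LinearIndependent ℝ fun i => fun j => ((u i j : ℝ)))
    (pred : ℝ → Prop) (I : Set ℝ)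
    (hfor : ∀ (μ : ℝ), μ ∈ I → ∀ n : ℕ, pred (μ + n))
    (hex : ∀ t : ℝ, pred t → ∃ n : ℕ, t - n ∈ I)
    (hI : ∀ μ ∈ I, ∀ μ' ∈ I, |μ - μ'| < 1) :
    Function.Bijective (psi u pred I hfor) := by
  constructor
  · rintro ⟨⟨d, hd⟩, n⟩ ⟨⟨d', hd'⟩, n'⟩ h
    have hval : d + ∑ i, n i • u i = d' + ∑ i, n' i • u i := congrArg Subtype.val h
    obtain ⟨μ, hμI, hμ⟩ := hd
    obtain ⟨μ', hμ'I, hμ'⟩ := hd'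
    rw [cast_sum_eq] at hμ hμ'
    have hcoef : (fun i => μ i + (n i : ℝ)) = (fun i => μ' i + (n' i : ℝ)) := by
      apply coeff_unique u hu
      intro j
      have h1 : ((d + ∑ i, n i • u i) j : ℝ) = ((d' + ∑ i, n' i • u i) j : ℝ) := by
        rw [hval]
      rw [add_nsmul_apply, add_nsmul_apply, hμ j, hμ' j, ← Finset.sum_add_distrib,
        ← Finset.sum_add_distrib] at h1
      calc ∑ i, (μ i + (n i : ℝ)) * (u i j : ℝ)
          = ∑ i, (μ i * (u i j : ℝ) + (n i : ℝ) * (u i j : ℝ)) :=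
            Finset.sum_congr rfl fun i _ => add_mul _ _ _
        _ = ∑ i, (μ' i * (u i j : ℝ) + (n' i : ℝ) * (u i j : ℝ)) := h1
        _ = ∑ i, (μ' i + (n' i : ℝ)) * (u i j : ℝ) :=
            Finset.sum_congr rfl fun i _ => (add_mul _ _ _).symm
    have hn : n = n' := by
      funext i
      have hi := congrFun hcoef i
      have habs := hI (μ i) (hμI i) (μ' i) (hμ'I i)
      have : (n i : ℝ) = (n' i : ℝ) := by
        rcases lt_trichotomy (n i) (n' i) with hlt | heq | hgt
        · exfalso
          have : (n i : ℝ) + 1 ≤ (n' i : ℝ) := by exact_mod_cast hlt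
          have := abs_lt.mp habs
          linarith
        · exact_mod_cast heq
        · exfalso
          have : (n' i : ℝ) + 1 ≤ (n i : ℝ) := by exact_mod_cast hgt
          have := abs_lt.mp habs
          linarith
      exact_mod_cast this
    subst hn
    have hdd : d = d' := by
      have := hval
      rwa [add_left_inj] at this
    subst hdd
    rfl
  · rintro ⟨x, lam, hlam, hx⟩
    obtain ⟨n, hn⟩ := Classical.axiomOfChoice (fun i => hex (lam i) (hlam i))
    rw [cast_sum_eq] at hx
    refine ⟨⟨⟨x - ∑ i, n i • u i, ?_⟩, n⟩, ?_⟩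
    · refine ⟨fun i => lam i - n i, hn, ?_⟩
      rw [cast_sum_eq]
      intro j
      have h1 : ((x - ∑ i, n i • u i) j : ℝ) = (x j : ℝ) - ∑ i, (n i : ℝ) * (u i j : ℝ) := by
        have := add_nsmul_apply u (x - ∑ i, n i • u i) n j
        rw [sub_add_cancel] at this
        linarith [this]
      rw [h1, hx j, ← Finset.sum_sub_distrib]
      exact Finset.sum_congr rfl fun i _ => by ring
    · apply Subtype.ext
      show (x - ∑ i, n i • u i) + ∑ i, n i • u i = x
      rw [sub_add_cancel]

end Stmt10Aux

namespace Stmt10Aux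

variable {m k : ℕ} (u : Fin k → (Fin m → ℤ))

lemma D_finite (I : Set ℝ) (hI : I ⊆ Set.Icc 0 1) :
    Set.Finite {x : Fin m → ℤ | ∃ μ : Fin k → ℝ, (∀ i, μ i ∈ I) ∧
      (fun j => (x j : ℝ)) = ∑ i, μ i • fun j => ((u i j : ℝ))} := by
  set R : Fin m → ℤ := fun j => ∑ i, |u i j| with hR
  apply Set.Finite.subset (Set.finite_Icc (fun j => -(R j)) R)
  rintro x ⟨μ, hμI, hμ⟩
  rw [cast_sum_eq] at hμ
  have hbound : ∀ j, |x j| ≤ R j := by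
    intro j
    have : |(x j : ℝ)| ≤ (R j : ℝ) := by
      rw [hμ j]
      refine (Finset.abs_sum_le_sum_abs _ _).trans ?_
      rw [hR]
      push_cast [Int.cast_abs]
      apply Finset.sum_le_sum
      intro i _
      rw [abs_mul]
      have h0 := (hI (hμI i)).1
      have h1 := (hI (hμI i)).2
      have : |μ i| ≤ 1 := by rw [abs_of_nonneg h0]; exact h1
      calc |μ i| * |(u i j : ℝ)| ≤ 1 * |(u i j : ℝ)| :=
            mul_le_mul_of_nonneg_right this (abs_nonneg _)
        _ = |(u i j : ℝ)| := one_mul _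
    exact_mod_cast this
  constructor
  · intro j; exact neg_le_of_abs_le (hbound j)
  · intro j; exact le_of_abs_le (hbound j)

end Stmt10Aux

namespace Stmt10Aux

variable {m k : ℕ} (u : Fin k → (Fin m → ℤ))

noncomputable def Lmap : (Fin k → ℝ) →ₗ[ℝ] (Fin m → ℝ) where
  toFun := fun lam => ∑ i, lam i • fun j => ((u i j : ℝ))
  map_add' := by
    intro a b
    simp only [Pi.add_apply, add_smul]
    rw [Finset.sum_add_distrib]
  map_smul' := by
    intro c a
    simp only [Pi.smul_apply, smul_eq_mul, RingHom.id_apply, Finset.smul_sum, smul_smul]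

lemma closure_cone (hu : LinearIndependent ℝ fun i => fun j => ((u i j : ℝ))) :
    closure {y : Fin m → ℝ | ∃ lam : Fin k → ℝ, (∀ i, 0 < lam i) ∧
        y = ∑ i, lam i • fun j => ((u i j : ℝ))} =
      {y : Fin m → ℝ | ∃ lam : Fin k → ℝ, (∀ i, 0 ≤ lam i) ∧
        y = ∑ i, lam i • fun j => ((u i j : ℝ))} := by
  have hker : LinearMap.ker (Lmap u) = ⊥ := by
    rw [LinearMap.ker_eq_bot']
    intro a ha
    funext i
    exact Fintype.linearIndependent_iff.mp hu a ha i
  have hce := LinearMap.isClosedEmbedding_of_injective hker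
  have h1 : {y : Fin m → ℝ | ∃ lam : Fin k → ℝ, (∀ i, 0 < lam i) ∧
      y = ∑ i, lam i • fun j => ((u i j : ℝ))} =
      Lmap u '' (Set.univ.pi fun _ : Fin k => Set.Ioi (0 : ℝ)) := by
    ext y
    simp only [Set.mem_setOf_eq, Set.mem_image, Set.mem_pi, Set.mem_univ, true_implies,
      Set.mem_Ioi]
    constructor
    · rintro ⟨lam, h1, h2⟩; exact ⟨lam, h1, h2.symm⟩
    · rintro ⟨lam, h1, h2⟩; exact ⟨lam, h1, h2.symm⟩
  rw [h1, hce.closure_image_eq, closure_pi_set]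
  simp only [Function.comp, closure_Ioi]
  ext y
  simp only [Set.mem_image, Set.mem_pi, Set.mem_univ, true_implies, Set.mem_Ici,
    Set.mem_setOf_eq]
  constructor
  · rintro ⟨lam, h1, h2⟩; exact ⟨lam, h1, h2.symm⟩
  · rintro ⟨lam, h1, h2⟩; exact ⟨lam, h1, h2.symm⟩

end Stmt10Aux

lemma cpow_finset_sum {ι : Type*} (x : ℂ) (hx : x ≠ 0) (t : Finset ι) (f : ι → ℂ) :
    x ^ (∑ i ∈ t, f i) = ∏ i ∈ t, x ^ f i := by
  simp [Complex.cpow_def_of_ne_zero hx, Finset.mul_sum, Complex.exp_sum]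

lemma inv_cpow_eq (q : ℝ) (hq : 0 < q) (z : ℂ) : ((q⁻¹ : ℝ) : ℂ) ^ z = (q : ℂ) ^ (-z) := by
  have harg : (↑q : ℂ).arg ≠ Real.pi := by
    rw [Complex.arg_ofReal_of_nonneg hq.le]
    exact (Real.pi_ne_zero).symm
  rw [Complex.ofReal_inv, Complex.inv_cpow _ _ harg, ← Complex.cpow_neg]

lemma one_sub_inv_inv (r : ℂ) (h0 : r ≠ 0) : (1 - r⁻¹)⁻¹ = -r * (1 - r)⁻¹ := by
  have h2 : (1 : ℂ) - r⁻¹ = (r - 1) * r⁻¹ := by field_simp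
  rw [h2, mul_inv, inv_inv, show r - 1 = -(1 - r) by ring, inv_neg]
  ring

/-- Stanley-type reciprocity for the generating function of a relatively open
simplicial cone `F₀` generated by independent `u₁,…,u_k ∈ ℤ^m`:
`E(q, q^{-s}) = ∑_{e∈F₀∩ℤ^m} q^{(A+C)·e − (B·e)s}` equals the rational expression
`(∑_{e∈D₁} q^{(A+C)·e − (B·e)s}) · ∏ᵢ (1 − q^{(A+C)·uᵢ − (B·uᵢ)s})⁻¹`, and
substituting `q → q⁻¹` in that expression yields
`(−1)^k ∑_{e ∈ closure(F₀) ∩ ℤ^m} q^{(A+C)·e − (B·e)s}`. -/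
theorem stmt10 (m k : ℕ) (u : Fin k → (Fin m → ℤ))
    (hu : LinearIndependent ℝ fun i => fun j => ((u i j : ℝ)))
    (A C B : Fin m → ℤ) (hB : ∀ i, 0 < ∑ j, B j * u i j)
    (q : ℝ) (hq : 1 < q) (s : ℂ)
    (hconv : ∀ i, ((∑ j, (A j + C j) * u i j : ℤ) : ℝ) -
        ((∑ j, B j * u i j : ℤ) : ℝ) * s.re < 0) :
    (∑' x : {x : Fin m → ℤ // (fun j => (x j : ℝ)) ∈
          {y : Fin m → ℝ | ∃ lam : Fin k → ℝ, (∀ i, 0 < lam i) ∧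
            y = ∑ i, lam i • fun j => ((u i j : ℝ))}},
        (q : ℂ) ^ (((∑ j, (A j + C j) * x.1 j : ℤ) : ℂ) -
          ((∑ j, B j * x.1 j : ℤ) : ℂ) * s)) =
      (∑' e : {e : Fin m → ℤ // ∃ μ : Fin k → ℝ, (∀ i, μ i ∈ Set.Ioc (0 : ℝ) 1) ∧
            (fun j => (e j : ℝ)) = ∑ i, μ i • fun j => ((u i j : ℝ))},
          (q : ℂ) ^ (((∑ j, (A j + C j) * e.1 j : ℤ) : ℂ) -
            ((∑ j, B j * e.1 j : ℤ) : ℂ) * s)) *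
        ∏ i : Fin k, (1 - (q : ℂ) ^ (((∑ j, (A j + C j) * u i j : ℤ) : ℂ) -
            ((∑ j, B j * u i j : ℤ) : ℂ) * s))⁻¹ ∧
    (∑' e : {e : Fin m → ℤ // ∃ μ : Fin k → ℝ, (∀ i, μ i ∈ Set.Ioc (0 : ℝ) 1) ∧
          (fun j => (e j : ℝ)) = ∑ i, μ i • fun j => ((u i j : ℝ))},
        ((q⁻¹ : ℝ) : ℂ) ^ (((∑ j, (A j + C j) * e.1 j : ℤ) : ℂ) -
          ((∑ j, B j * e.1 j : ℤ) : ℂ) * s)) *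
      ∏ i : Fin k, (1 - ((q⁻¹ : ℝ) : ℂ) ^ (((∑ j, (A j + C j) * u i j : ℤ) : ℂ) -
          ((∑ j, B j * u i j : ℤ) : ℂ) * s))⁻¹ =
      (-1 : ℂ) ^ k *
        ∑' x : {x : Fin m → ℤ // (fun j => (x j : ℝ)) ∈
            closure {y : Fin m → ℝ | ∃ lam : Fin k → ℝ, (∀ i, 0 < lam i) ∧
              y = ∑ i, lam i • fun j => ((u i j : ℝ))}},
          (q : ℂ) ^ (((∑ j, (A j + C j) * x.1 j : ℤ) : ℂ) -
            ((∑ j, B j * x.1 j : ℤ) : ℂ) * s) := by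
  classical
  have hq0 : (0 : ℝ) < q := lt_trans one_pos hq
  have hqC : (q : ℂ) ≠ 0 := Complex.ofReal_ne_zero.mpr (ne_of_gt hq0)
  set f : (Fin m → ℤ) → ℂ := fun x => ((∑ j, (A j + C j) * x j : ℤ) : ℂ) -
    ((∑ j, B j * x j : ℤ) : ℂ) * s with hfdef
  have hfadd : ∀ x y, f (x + y) = f x + f y := by
    intro x y
    have e1 : (∑ j, (A j + C j) * (x + y) j) = (∑ j, (A j + C j) * x j) +
        ∑ j, (A j + C j) * y j := by
      rw [← Finset.sum_add_distrib]
      exact Finset.sum_congr rfl fun j _ => by simp only [Pi.add_apply]; ring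
    have e2 : (∑ j, B j * (x + y) j) = (∑ j, B j * x j) + ∑ j, B j * y j := by
      rw [← Finset.sum_add_distrib]
      exact Finset.sum_congr rfl fun j _ => by simp only [Pi.add_apply]; ring
    simp only [hfdef, e1, e2]
    push_cast
    ring
  set F : (Fin m → ℤ) →+ ℂ := AddMonoidHom.mk' f hfadd with hFdef
  set g : (Fin m → ℤ) → ℂ := fun x => (q : ℂ) ^ f x with hgdef
  set r : Fin k → ℂ := fun i => (q : ℂ) ^ f (u i) with hrdef
  have hre : ∀ i, (f (u i)).re < 0 := by
    intro i
    have h := hconv i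
    have hre2 : (f (u i)).re = ((∑ j, (A j + C j) * u i j : ℤ) : ℝ) -
        ((∑ j, B j * u i j : ℤ) : ℝ) * s.re := by
      simp [hfdef, Complex.sub_re, Complex.mul_re]
    rw [hre2]
    exact h
  have hr : ∀ i, ‖r i‖ < 1 := by
    intro i
    rw [hrdef]
    show ‖(q : ℂ) ^ f (u i)‖ < 1
    rw [Complex.norm_cpow_eq_rpow_re_of_pos hq0]
    exact Real.rpow_lt_one_of_one_lt_of_neg hq (hre i)
  have hfsum : ∀ (d : Fin m → ℤ) (n : Fin k → ℕ),
      f (d + ∑ i, n i • u i) = f d + ∑ i, (n i : ℂ) * f (u i) := by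
    intro d n
    rw [hfadd]
    congr 1
    calc f (∑ i, n i • u i) = F (∑ i, n i • u i) := rfl
      _ = ∑ i, F (n i • u i) := map_sum F _ _
      _ = ∑ i, (n i : ℂ) * f (u i) := Finset.sum_congr rfl fun i _ => by
            rw [map_nsmul, nsmul_eq_mul]; rfl
  have hg1 : ∀ (d : Fin m → ℤ) (n : Fin k → ℕ),
      g (d + ∑ i, n i • u i) = g d * ∏ i, r i ^ n i := by
    intro d n
    show (q : ℂ) ^ f (d + ∑ i, n i • u i) = (q : ℂ) ^ f d * ∏ i, r i ^ n i
    rw [hfsum d n, Complex.cpow_add _ _ hqC, cpow_finset_sum _ hqC]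
    congr 1
    exact Finset.prod_congr rfl fun i _ => Complex.cpow_nat_mul _ _ _
  -- open cone equivalence
  have hfor1 : ∀ μ : ℝ, μ ∈ Set.Ioc (0 : ℝ) 1 → ∀ n : ℕ, (fun t : ℝ => 0 < t) (μ + n) :=
    fun μ hμ n => add_pos_of_pos_of_nonneg hμ.1 (Nat.cast_nonneg n)
  have hex1 : ∀ t : ℝ, (fun t : ℝ => 0 < t) t → ∃ n : ℕ, t - n ∈ Set.Ioc (0 : ℝ) 1 := by
    intro t ht
    refine ⟨(⌈t⌉ - 1).toNat, ?_⟩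
    have h1 : (1 : ℤ) ≤ ⌈t⌉ := Int.ceil_pos.mpr ht
    have h2 : (((⌈t⌉ - 1).toNat : ℕ) : ℝ) = (⌈t⌉ : ℝ) - 1 := by
      have := Int.toNat_of_nonneg (by omega : (0 : ℤ) ≤ ⌈t⌉ - 1)
      have h3 : (((⌈t⌉ - 1).toNat : ℤ) : ℝ) = ((⌈t⌉ - 1 : ℤ) : ℝ) := by rw [this]
      push_cast at h3
      push_cast
      linarith
    rw [Set.mem_Ioc, h2]
    have h4 := Int.ceil_lt_add_one t
    have h5 := Int.le_ceil t
    constructor <;> linarith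
  have hI1 : ∀ μ ∈ Set.Ioc (0 : ℝ) 1, ∀ μ' ∈ Set.Ioc (0 : ℝ) 1, |μ - μ'| < 1 := by
    intro μ hμ μ' hμ'
    rw [abs_lt]
    obtain ⟨a1, a2⟩ := hμ
    obtain ⟨b1, b2⟩ := hμ'
    constructor <;> linarith
  let e1 := Equiv.ofBijective _
    (Stmt10Aux.psi_bijective u hu (fun t : ℝ => 0 < t) (Set.Ioc 0 1) hfor1 hex1 hI1)
  -- closed cone equivalence
  have hfor0 : ∀ μ : ℝ, μ ∈ Set.Ico (0 : ℝ) 1 → ∀ n : ℕ, (fun t : ℝ => 0 ≤ t) (μ + n) :=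
    fun μ hμ n => add_nonneg hμ.1 (Nat.cast_nonneg n)
  have hex0 : ∀ t : ℝ, (fun t : ℝ => 0 ≤ t) t → ∃ n : ℕ, t - n ∈ Set.Ico (0 : ℝ) 1 := by
    intro t ht
    refine ⟨(⌊t⌋).toNat, ?_⟩
    have h1 : (0 : ℤ) ≤ ⌊t⌋ := Int.floor_nonneg.mpr ht
    have h2 : (((⌊t⌋).toNat : ℕ) : ℝ) = (⌊t⌋ : ℝ) := by
      have := Int.toNat_of_nonneg h1
      have h3 : (((⌊t⌋).toNat : ℤ) : ℝ) = ((⌊t⌋ : ℤ) : ℝ) := by rw [this]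
      push_cast at h3
      push_cast
      linarith
    rw [Set.mem_Ico, h2]
    have h4 := Int.floor_le t
    have h5 := Int.lt_floor_add_one t
    constructor <;> linarith
  have hI0 : ∀ μ ∈ Set.Ico (0 : ℝ) 1, ∀ μ' ∈ Set.Ico (0 : ℝ) 1, |μ - μ'| < 1 := by
    intro μ hμ μ' hμ'
    rw [abs_lt]
    obtain ⟨a1, a2⟩ := hμ
    obtain ⟨b1, b2⟩ := hμ'
    constructor <;> linarith
  let e0 := Equiv.ofBijective _
    (Stmt10Aux.psi_bijective u hu (fun t : ℝ => 0 ≤ t) (Set.Ico 0 1) hfor0 hex0 hI0)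
  have hfin1 := Stmt10Aux.D_finite u (Set.Ioc 0 1) Set.Ioc_subset_Icc_self
  have hfin0 := Stmt10Aux.D_finite u (Set.Ico 0 1) Set.Ico_subset_Icc_self
  have part1 := factor_tsum g r hr e1 hfin1 (fun d n => hg1 d.1 n)
  have part0 := factor_tsum g r hr e0 hfin0 (fun d n => hg1 d.1 n)
  refine ⟨part1, ?_⟩
  -- reciprocity bijection between the two half-open boxes
  have hmem01 : ∀ d : Fin m → ℤ, (∃ μ : Fin k → ℝ, (∀ i, μ i ∈ Set.Ioc (0:ℝ) 1) ∧
      (fun j => (d j : ℝ)) = ∑ i, μ i • fun j => ((u i j : ℝ))) →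
      (∃ μ : Fin k → ℝ, (∀ i, μ i ∈ Set.Ico (0:ℝ) 1) ∧
      (fun j => ((((∑ i, u i) - d) j : ℤ) : ℝ)) = ∑ i, μ i • fun j => ((u i j : ℝ))) := by
    rintro d ⟨μ, hμI, hμ⟩
    refine ⟨fun i => 1 - μ i, fun i =>
      ⟨show (0:ℝ) ≤ 1 - μ i by linarith [(hμI i).2],
       show (1:ℝ) - μ i < 1 by linarith [(hμI i).1]⟩, ?_⟩
    rw [Stmt10Aux.cast_sum_eq u] at hμ ⊢
    intro j
    have hpt : (((∑ i, u i) - d) j : ℝ) = (∑ i, (u i j : ℝ)) - (d j : ℝ) := by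
      simp only [Pi.sub_apply, Finset.sum_apply]
      push_cast
      ring
    rw [hpt, hμ j, ← Finset.sum_sub_distrib]
    exact Finset.sum_congr rfl fun i _ => by ring
  have hmem10 : ∀ d : Fin m → ℤ, (∃ μ : Fin k → ℝ, (∀ i, μ i ∈ Set.Ico (0:ℝ) 1) ∧
      (fun j => (d j : ℝ)) = ∑ i, μ i • fun j => ((u i j : ℝ))) →
      (∃ μ : Fin k → ℝ, (∀ i, μ i ∈ Set.Ioc (0:ℝ) 1) ∧
      (fun j => ((((∑ i, u i) - d) j : ℤ) : ℝ)) = ∑ i, μ i • fun j => ((u i j : ℝ))) := by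
    rintro d ⟨μ, hμI, hμ⟩
    refine ⟨fun i => 1 - μ i, fun i =>
      ⟨show (0:ℝ) < 1 - μ i by linarith [(hμI i).2],
       show (1:ℝ) - μ i ≤ 1 by linarith [(hμI i).1]⟩, ?_⟩
    rw [Stmt10Aux.cast_sum_eq u] at hμ ⊢
    intro j
    have hpt : (((∑ i, u i) - d) j : ℝ) = (∑ i, (u i j : ℝ)) - (d j : ℝ) := by
      simp only [Pi.sub_apply, Finset.sum_apply]
      push_cast
      ring
    rw [hpt, hμ j, ← Finset.sum_sub_distrib]
    exact Finset.sum_congr rfl fun i _ => by ring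
  let τ : {e : Fin m → ℤ // ∃ μ : Fin k → ℝ, (∀ i, μ i ∈ Set.Ioc (0:ℝ) 1) ∧
        (fun j => (e j : ℝ)) = ∑ i, μ i • fun j => ((u i j : ℝ))} ≃
      {d : Fin m → ℤ // ∃ μ : Fin k → ℝ, (∀ i, μ i ∈ Set.Ico (0:ℝ) 1) ∧
        (fun j => (d j : ℝ)) = ∑ i, μ i • fun j => ((u i j : ℝ))} :=
    ⟨fun d => ⟨(∑ i, u i) - d.1, hmem01 d.1 d.2⟩,
     fun d => ⟨(∑ i, u i) - d.1, hmem10 d.1 d.2⟩,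
     fun d => Subtype.ext (sub_sub_cancel _ _),
     fun d => Subtype.ext (sub_sub_cancel _ _)⟩
  have hA : ∀ x : Fin m → ℤ, ((q⁻¹ : ℝ) : ℂ) ^ f x = (q:ℂ) ^ (-f x) :=
    fun x => inv_cpow_eq q hq0 (f x)
  have hrne0 : ∀ i, r i ≠ 0 := by
    intro i h
    rw [hrdef] at h
    exact hqC ((Complex.cpow_eq_zero_iff _ _).mp h).1
  have hprod_r : (q:ℂ) ^ f (∑ i, u i) = ∏ i, r i := by
    have h : f (∑ i, u i) = ∑ i, f (u i) := map_sum F u Finset.univ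
    rw [h, cpow_finset_sum _ hqC]
  have step1 : ∏ i, (1 - ((q⁻¹:ℝ):ℂ) ^ f (u i))⁻¹ =
      (-1:ℂ)^k * ((q:ℂ) ^ f (∑ i, u i) * ∏ i, (1 - r i)⁻¹) := by
    calc ∏ i, (1 - ((q⁻¹:ℝ):ℂ) ^ f (u i))⁻¹
        = ∏ i, (-(r i) * (1 - r i)⁻¹) := Finset.prod_congr rfl fun i _ => by
          rw [hA, Complex.cpow_neg]
          exact one_sub_inv_inv _ (hrne0 i)
      _ = (∏ i, -(r i)) * ∏ i, (1 - r i)⁻¹ := Finset.prod_mul_distrib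
      _ = ((-1:ℂ)^k * ∏ i, r i) * ∏ i, (1 - r i)⁻¹ := by
          congr 1
          calc (∏ i, -(r i)) = ∏ i, ((-1:ℂ) * r i) :=
                Finset.prod_congr rfl fun i _ => (neg_one_mul _).symm
            _ = (∏ _i : Fin k, (-1:ℂ)) * ∏ i, r i := Finset.prod_mul_distrib
            _ = (-1:ℂ)^k * ∏ i, r i := by
                rw [Finset.prod_const, Finset.card_univ, Fintype.card_fin]
      _ = _ := by rw [← hprod_r]; ring
  have step2 : (∑' e : {e : Fin m → ℤ // ∃ μ : Fin k → ℝ, (∀ i, μ i ∈ Set.Ioc (0:ℝ) 1) ∧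
        (fun j => (e j : ℝ)) = ∑ i, μ i • fun j => ((u i j : ℝ))}, (q:ℂ) ^ (-f e.1)) *
        (q:ℂ) ^ f (∑ i, u i) =
      ∑' d : {d : Fin m → ℤ // ∃ μ : Fin k → ℝ, (∀ i, μ i ∈ Set.Ico (0:ℝ) 1) ∧
        (fun j => (d j : ℝ)) = ∑ i, μ i • fun j => ((u i j : ℝ))}, g d.1 := by
    calc (∑' e : {e : Fin m → ℤ // ∃ μ : Fin k → ℝ, (∀ i, μ i ∈ Set.Ioc (0:ℝ) 1) ∧
          (fun j => (e j : ℝ)) = ∑ i, μ i • fun j => ((u i j : ℝ))}, (q:ℂ) ^ (-f e.1)) *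
          (q:ℂ) ^ f (∑ i, u i)
        = ∑' e : {e : Fin m → ℤ // ∃ μ : Fin k → ℝ, (∀ i, μ i ∈ Set.Ioc (0:ℝ) 1) ∧
          (fun j => (e j : ℝ)) = ∑ i, μ i • fun j => ((u i j : ℝ))}, g ((τ e).1) := by
          rw [← tsum_mul_right]
          apply tsum_congr
          intro e
          have hfs : f ((∑ i, u i) - e.1) = -f e.1 + f (∑ i, u i) := by
            have h2 : f ((∑ i, u i) - e.1) = f (∑ i, u i) - f e.1 := map_sub F _ _
            rw [h2]; ring
          show (q:ℂ) ^ (-f e.1) * (q:ℂ) ^ f (∑ i, u i) = (q:ℂ) ^ f ((∑ i, u i) - e.1)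
          rw [hfs, Complex.cpow_add _ _ hqC]
      _ = _ := τ.tsum_eq (fun d => g d.1)
  rw [Stmt10Aux.closure_cone u hu]
  calc (∑' e : {e : Fin m → ℤ // ∃ μ : Fin k → ℝ, (∀ i, μ i ∈ Set.Ioc (0:ℝ) 1) ∧
        (fun j => (e j : ℝ)) = ∑ i, μ i • fun j => ((u i j : ℝ))}, ((q⁻¹:ℝ):ℂ) ^ f e.1) *
        ∏ i, (1 - ((q⁻¹:ℝ):ℂ) ^ f (u i))⁻¹
      = (∑' e : {e : Fin m → ℤ // ∃ μ : Fin k → ℝ, (∀ i, μ i ∈ Set.Ioc (0:ℝ) 1) ∧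
        (fun j => (e j : ℝ)) = ∑ i, μ i • fun j => ((u i j : ℝ))}, (q:ℂ) ^ (-f e.1)) *
        ((-1:ℂ)^k * ((q:ℂ) ^ f (∑ i, u i) * ∏ i, (1 - r i)⁻¹)) := by
        rw [step1]
        congr 1
        exact tsum_congr fun e => hA e.1
    _ = (-1:ℂ)^k * (((∑' e : {e : Fin m → ℤ // ∃ μ : Fin k → ℝ, (∀ i, μ i ∈ Set.Ioc (0:ℝ) 1) ∧
        (fun j => (e j : ℝ)) = ∑ i, μ i • fun j => ((u i j : ℝ))}, (q:ℂ) ^ (-f e.1)) *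
        (q:ℂ) ^ f (∑ i, u i)) * ∏ i, (1 - r i)⁻¹) := by ring
    _ = (-1:ℂ)^k * ((∑' d : {d : Fin m → ℤ // ∃ μ : Fin k → ℝ, (∀ i, μ i ∈ Set.Ico (0:ℝ) 1) ∧
        (fun j => (d j : ℝ)) = ∑ i, μ i • fun j => ((u i j : ℝ))}, g d.1) * ∏ i, (1 - r i)⁻¹) := by
        rw [step2]
    _ = (-1:ℂ)^k * ∑' x : {x : Fin m → ℤ // ∃ lam : Fin k → ℝ,
        (∀ i, (fun t : ℝ => 0 ≤ t) (lam i)) ∧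
        (fun j => (x j : ℝ)) = ∑ i, lam i • fun j => ((u i j : ℝ))}, g x.1 := by
        rw [← part0]
end

section
/- Let W be a finite group, q a nonzero element of a field, and suppose for each w ∈ W we have rational functions E_w and E'_w in q, q^{−s} satisfying: (i) E_{I_w} inverts as E_{I_w}|_{q→q^{−1}} = (−1)^m E_{[m]∖I_w}, (ii) E_{[m]∖I_w} = q^{M} E_{[l]∖I_w} for a fixed monomial q^M = q^{(A+γ_0)·a_0 − (B·a_0)s} independent of w, and (iii) the re-indexing [l]∖I_w = I_{w w_0} with λ(w) + λ(w w_0) = |Φ^+|. Then Z := ∑_{w∈W} q^{−λ(w)} E_{I_w} satisfies Z|_{q→q^{−1}} = (−1)^m q^{|Φ^+| + (A+γ_0)·a_0 − (B·a_0)s} Z. -/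
/-- Abstract functional equation for a weighted sum over a finite Weyl group:
if each summand `E_{I_w}` inverts as `E_{I_w}|_{q→q⁻¹} = (−1)^m E_{[m]∖I_w}`
(encoded by `Einv`), if `E_{[m]∖I_w} = q^M E_{[l]∖I_w}` for a fixed monomial `qM`,
and if `[l]∖I_w = I_{w w₀}` with `λ(w) + λ(w w₀) = |Φ⁺|`, then
`Z = ∑_w q^{−λ(w)} E_{I_w}` satisfies
`Z|_{q→q⁻¹} = (−1)^m q^{|Φ⁺|} qM Z`. -/
theorem stmt13 {W : Type*} [Group W] [Fintype W] {K : Type*} [Field K]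
    (m l N : ℕ) (q qM : K) (hq : q ≠ 0)
    (E Einv : Finset (Fin m) → K)
    (lam : W → ℕ) (I : W → Finset (Fin m)) (w0 : W)
    (L : Finset (Fin m)) (hL : L = Finset.univ.filter (fun i : Fin m => i.val < l))
    (hIL : ∀ w : W, I w ⊆ L)
    (hi : ∀ w : W, Einv (I w) = (-1 : K) ^ m * E (Finset.univ \ I w))
    (hii : ∀ w : W, E (Finset.univ \ I w) = qM * E (L \ I w))
    (hiii : ∀ w : W, L \ I w = I (w * w0))
    (hlen : ∀ w : W, lam w + lam (w * w0) = N) :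
    ∑ w : W, q ^ ((lam w : ℤ)) * Einv (I w) =
      (-1 : K) ^ m * q ^ (N : ℤ) * qM * ∑ w : W, q ^ (-(lam w : ℤ)) * E (I w) := by
  rw [Finset.mul_sum]
  refine Fintype.sum_equiv (Equiv.mulRight w0) _ _ (fun w => ?_)
  simp only [Equiv.coe_mulRight]
  rw [hi w, hii w, hiii w]
  have h : (lam w : ℤ) = (N : ℤ) + (-(lam (w * w0) : ℤ)) := by
    have := hlen w
    omega
  rw [h, zpow_add₀ hq]
  ring
end
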